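/- arXiv:0910.1182 — 4 statements merged into one kernel-verified Lean document; each statement's English description precedes it below -/
import Mathlib

section
/- Let e ≥ 1 and d ≥ 1, and let P be the simplex in R^d with vertices v_0 = (−e,...,−e) and v_i = e_i for 1 ≤ i ≤ d. Then the δ-vector of P is (1, e, e, ..., e), i.e., δ_0 = 1 and δ_i = e for all 1 ≤ i ≤ d. -/
open scoped BigOperators Pointwise

noncomputable section

/-- The lattice points of a subset of `ℝ^N`. -/
def latticePoints {N : ℕ} (P : Set (Fin N → ℝ)) : Set (Fin N → ℤ) :=
  {x | (fun i => (x i : ℝ)) ∈ P}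

/-- The Ehrhart counting function `i(P,n) = |nP ∩ ℤ^N|`. -/
def ehrhart {N : ℕ} (P : Set (Fin N → ℝ)) (n : ℕ) : ℤ :=
  ((latticePoints ((n : ℝ) • P)).ncard : ℤ)

/-- The `i`-th entry of the Ehrhart δ-vector of a `d`-dimensional polytope,
i.e. the coefficient of `λ^i` in `(1-λ)^{d+1} · Σ_{n ≥ 0} i(P,n) λ^n`. -/
def deltaVec {N : ℕ} (P : Set (Fin N → ℝ)) (d i : ℕ) : ℤ :=
  ∑ j ∈ Finset.range (i + 1),
    (-1 : ℤ) ^ (i - j) * (Nat.choose (d + 1) (i - j)) * ehrhart P j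

/-- `P ⊆ ℝ^N` is an integral convex polytope of dimension `d`. -/
def IsIntegralPolytope {N : ℕ} (P : Set (Fin N → ℝ)) (d : ℕ) : Prop :=
  (∃ V : Finset (Fin N → ℤ),
      P = convexHull ℝ ((fun x => fun i => ((x i : ℤ) : ℝ)) '' (V : Set (Fin N → ℤ)))) ∧
    Module.finrank ℝ (affineSpan ℝ P).direction = d

namespace Stmt5Aux



/-- backward difference operator -/
def Del (f : ℕ → ℤ) : ℕ → ℤ
  | 0 => f 0
  | n+1 => f (n+1) - f n

/-- coefficient of `λ^n` in `λ^h / (1-λ)^{b+1}` -/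
def F (h b : ℕ) : ℕ → ℤ := fun n => if h ≤ n then ((n - h + b).choose b : ℤ) else 0

lemma del_F (h b : ℕ) : Del (F h (b+1)) = F h b := by
  funext n
  cases n with
  | zero =>
    simp only [Del, F]
    by_cases hh : h = 0 <;> simp [hh, Nat.choose_self]
  | succ n =>
    simp only [Del, F]
    rcases lt_trichotomy h (n+1) with hl | heq | hg
    · have h1 : h ≤ n + 1 := le_of_lt hl
      have h2 : h ≤ n := by omega
      simp only [h1, if_pos, h2]
      have e1 : n + 1 - h + (b + 1) = (n - h + (b + 1)) + 1 := by omega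
      rw [e1, Nat.choose_succ_succ (n - h + (b + 1)) b]
      push_cast
      have e2 : n + 1 - h + b = n - h + (b + 1) := by omega
      rw [e2]
      ring
    · subst heq
      simp [Nat.sub_self]
    · have h1 : ¬ h ≤ n + 1 := by omega
      have h2 : ¬ h ≤ n := by omega
      simp [h1, h2]

lemma F_zero_apply (h n : ℕ) : F h 0 n = if h ≤ n then 1 else 0 := by
  simp [F]

lemma del_F_zero (h : ℕ) : Del (F h 0) = fun n => if n = h then 1 else 0 := by
  funext n
  cases n with
  | zero =>
    simp only [Del, F_zero_apply]
    by_cases hh : h = 0 <;> simp [hh, eq_comm]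
  | succ n =>
    simp only [Del, F_zero_apply]
    by_cases h1 : h ≤ n + 1 <;> by_cases h2 : h ≤ n
    · have : ¬ (n + 1 = h) := by omega
      simp [h1, h2, this]
    · have : n + 1 = h := by omega
      simp [h1, h2, this]
    · omega
    · have : ¬ (n + 1 = h) := by omega
      simp [h1, h2, this]

lemma del_iter_F (b h : ℕ) : Del^[b] (F h b) = F h 0 := by
  induction b with
  | zero => rfl
  | succ b ih => rw [Function.iterate_succ_apply, del_F, ih]

lemma del_iter_succ_F (b h : ℕ) : Del^[b+1] (F h b) = fun n => if n = h then 1 else 0 := by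
  rw [Function.iterate_succ_apply', del_iter_F, del_F_zero]

lemma Del_sum {ι : Type*} (s : Finset ι) (f : ι → ℕ → ℤ) :
    Del (fun n => ∑ x ∈ s, f x n) = fun n => ∑ x ∈ s, Del (f x) n := by
  funext n
  cases n with
  | zero => simp [Del]
  | succ n => simp [Del, Finset.sum_sub_distrib]

lemma Del_iter_sum {ι : Type*} (k : ℕ) (s : Finset ι) (f : ι → ℕ → ℤ) :
    Del^[k] (fun n => ∑ x ∈ s, f x n) = fun n => ∑ x ∈ s, Del^[k] (f x) n := by
  induction k with
  | zero => simp
  | succ k ih =>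
    rw [Function.iterate_succ_apply', ih, Del_sum]
    funext n
    apply Finset.sum_congr rfl
    intro x _
    rw [Function.iterate_succ_apply']

lemma Del_const_mul (c : ℤ) (f : ℕ → ℤ) :
    Del (fun n => c * f n) = fun n => c * Del f n := by
  funext n
  cases n with
  | zero => simp [Del]
  | succ n => simp [Del]; ring

lemma Del_iter_const_mul (k : ℕ) (c : ℤ) (f : ℕ → ℤ) :
    Del^[k] (fun n => c * f n) = fun n => c * Del^[k] f n := by
  induction k with
  | zero => simp
  | succ k ih =>
    rw [Function.iterate_succ_apply', ih, Del_const_mul]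
    funext n
    rw [Function.iterate_succ_apply']

/-- `(1-S)^m f` equals the `m`-fold iterated backward difference. -/
lemma sum_alt_eq_del_iter (m : ℕ) (f : ℕ → ℤ) (i : ℕ) :
    ∑ k ∈ Finset.range (i+1), (-1:ℤ)^k * (m.choose k : ℤ) * f (i - k) = Del^[m] f i := by
  induction m generalizing i with
  | zero =>
    rw [Finset.sum_eq_single 0]
    · simp
    · intro k hk hk0
      rw [Nat.choose_eq_zero_of_lt (by omega)]
      simp
    · simp
  | succ m ih =>
    rw [Function.iterate_succ_apply']
    cases i with
    | zero =>
      have : Del (Del^[m] f) 0 = Del^[m] f 0 := rfl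
      rw [this, ← ih 0]
      simp
    | succ i =>
      have hdel : Del (Del^[m] f) (i+1) = Del^[m] f (i+1) - Del^[m] f i := rfl
      rw [hdel, ← ih (i+1), ← ih i]
      have split : ∑ k ∈ Finset.range (i+1+1), (-1:ℤ)^k * ((m+1).choose k : ℤ) * f (i+1-k)
          = (∑ k ∈ Finset.range (i+1+1), (-1:ℤ)^k * (m.choose k : ℤ) * f (i+1-k))
            + ∑ k ∈ Finset.range (i+1+1),
                (-1:ℤ)^k * (if k = 0 then 0 else (m.choose (k-1) : ℤ)) * f (i+1-k) := by
        rw [← Finset.sum_add_distrib]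
        apply Finset.sum_congr rfl
        intro k _
        cases k with
        | zero => simp
        | succ k =>
          have h0 : (if k + 1 = 0 then (0:ℤ) else (m.choose (k+1-1) : ℤ)) = (m.choose k : ℤ) := by
            simp
          rw [Nat.choose_succ_succ, h0]
          push_cast
          ring
      rw [split]
      have second : ∑ k ∈ Finset.range (i+1+1),
              (-1:ℤ)^k * (if k = 0 then 0 else (m.choose (k-1) : ℤ)) * f (i+1-k)
          = - ∑ k ∈ Finset.range (i+1), (-1:ℤ)^k * (m.choose k : ℤ) * f (i-k) := by
        have hterm : ∀ k ∈ Finset.range (i+1),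
            ((-1:ℤ)^(k+1) * (if k+1 = 0 then 0 else (m.choose (k+1-1) : ℤ)) * f (i+1-(k+1)))
              = -((-1:ℤ)^k * (m.choose k : ℤ) * f (i-k)) := by
          intro k _
          have h0 : (if k + 1 = 0 then (0:ℤ) else (m.choose (k+1-1) : ℤ)) = (m.choose k : ℤ) := by
            simp
          have h1 : i + 1 - (k+1) = i - k := by omega
          rw [h0, h1, pow_succ]
          ring
        rw [Finset.sum_range_succ', Finset.sum_congr rfl hterm]
        simp [Finset.sum_neg_distrib]
      rw [second]
      ring



def mj (d e j : ℕ) : ℕ := e * j / (d * e + 1)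
def hj (d e j : ℕ) : ℕ := j - d * mj d e j

lemma mj_mul_le (d e j : ℕ) : mj d e j * (d * e + 1) ≤ e * j := Nat.div_mul_le_self _ _

lemma lt_mj_succ_mul (d e j : ℕ) : e * j < (mj d e j + 1) * (d * e + 1) := by
  have h := (Nat.div_add_mod (e * j) (d * e + 1)).symm
  have hr : (e * j) % (d * e + 1) < d * e + 1 := Nat.mod_lt _ (by omega)
  calc e * j = (d * e + 1) * (e * j / (d * e + 1)) + (e * j) % (d * e + 1) := h
  _ < (d * e + 1) * (e * j / (d * e + 1)) + (d * e + 1) := Nat.add_lt_add_left hr _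
  _ = (e * j / (d * e + 1) + 1) * (d * e + 1) := by ring
  _ = (mj d e j + 1) * (d * e + 1) := rfl

lemma dmj_le (d e j : ℕ) : d * mj d e j ≤ j := by
  have h2 : d * mj d e j * (d * e + 1) ≤ j * (d * e + 1) := by
    calc d * mj d e j * (d * e + 1) = d * (mj d e j * (d * e + 1)) := by ring
    _ ≤ d * (e * j) := Nat.mul_le_mul_left _ (mj_mul_le d e j)
    _ = (d * e) * j := by ring
    _ ≤ (d * e + 1) * j := Nat.mul_le_mul_right _ (Nat.le_succ _)
    _ = j * (d * e + 1) := by ring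
  exact Nat.le_of_mul_le_mul_right h2 (Nat.succ_pos _)

lemma hj_add_dmj (d e j : ℕ) : hj d e j + d * mj d e j = j := by
  have := dmj_le d e j
  unfold hj
  omega

lemma mj_zero (d e : ℕ) : mj d e 0 = 0 := by simp [mj]

lemma hj_zero (d e : ℕ) : hj d e 0 = 0 := by simp [hj, mj_zero]

lemma mj_lt_e (d e j : ℕ) (he : 1 ≤ e) (hjle : j ≤ d * e) : mj d e j < e := by
  unfold mj
  rw [Nat.div_lt_iff_lt_mul (Nat.succ_pos _)]
  calc e * j ≤ e * (d * e) := Nat.mul_le_mul_left _ hjle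
  _ < e * (d * e + 1) :=
      mul_lt_mul_of_pos_left (Nat.lt_succ_self _) (by omega : (0:ℕ) < e)

lemma hj_pos (d e j : ℕ) (hj1 : 1 ≤ j) : 1 ≤ hj d e j := by
  have h2 : d * mj d e j * (d * e + 1) < j * (d * e + 1) := by
    calc d * mj d e j * (d * e + 1) = d * (mj d e j * (d * e + 1)) := by ring
    _ ≤ d * (e * j) := Nat.mul_le_mul_left _ (mj_mul_le d e j)
    _ = (d * e) * j := by ring
    _ < (d * e) * j + j := by omega
    _ = j * (d * e + 1) := by ring
  have h3 : d * mj d e j < j := Nat.lt_of_mul_lt_mul_right h2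
  unfold hj
  omega

lemma hj_le_d (d e j : ℕ) (hjle : j ≤ d * e) : hj d e j ≤ d := by
  have hdm : e * j ≤ mj d e j * (d * e + 1) + d * e := by
    have h := lt_mj_succ_mul d e j
    have hexp : (mj d e j + 1) * (d * e + 1) = mj d e j * (d * e + 1) + (d * e + 1) := by ring
    omega
  have h1 : d * (e * j) ≤ d * (mj d e j * (d * e + 1) + d * e) := Nat.mul_le_mul_left _ hdm
  have e1 : d * (mj d e j * (d * e + 1) + d * e) = d * mj d e j * (d * e + 1) + d * (d * e) := by
    ring
  have e2 : d * (e * j) = (d * e) * j := by ring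
  have e3 : (d * mj d e j + d + 1) * (d * e + 1)
      = d * mj d e j * (d * e + 1) + d * (d * e) + d * e + d + 1 := by ring
  have key : j * (d * e + 1) < (d * mj d e j + d + 1) * (d * e + 1) := by
    have e4 : j * (d * e + 1) = (d * e) * j + j := by ring
    omega
  have h5 := Nat.lt_of_mul_lt_mul_right key
  unfold hj
  omega

lemma mj_spec (d e h m : ℕ) (he : 1 ≤ e) (h1 : 1 ≤ h) (h2 : h ≤ d) (hm : m < e) :
    mj d e (h + d * m) = m := by
  unfold mj
  apply Nat.div_eq_of_lt_le
  · calc m * (d * e + 1) = (d * e) * m + m := by ring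
    _ ≤ (d * e) * m + e * h := by
        have : m ≤ e * h := by
          calc m ≤ e := le_of_lt hm
          _ = e * 1 := (mul_one e).symm
          _ ≤ e * h := Nat.mul_le_mul_left _ h1
        omega
    _ = e * (h + d * m) := by ring
  · calc e * (h + d * m) = e * h + (d * e) * m := by ring
    _ ≤ e * d + (d * e) * m := by
        have : e * h ≤ e * d := Nat.mul_le_mul_left _ h2
        omega
    _ < (d * e) * m + m + (d * e) + 1 := by
        have : e * d = d * e := by ring
        omega
    _ = (m + 1) * (d * e + 1) := by ring

lemma hj_spec (d e h m : ℕ) (he : 1 ≤ e) (h1 : 1 ≤ h) (h2 : h ≤ d) (hm : m < e) :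
    hj d e (h + d * m) = h := by
  unfold hj
  rw [mj_spec d e h m he h1 h2 hm]
  omega

/-- the count `g` -/
def g (d e n : ℕ) : ℕ := ∑ j ∈ Finset.range (d * e + 1), (n + d - hj d e j).choose d

lemma g_eq (d e n : ℕ) (hd : 1 ≤ d) (he : 1 ≤ e) :
    g d e n = (n + d).choose d + e * ∑ h ∈ Finset.Icc 1 d, (n + d - h).choose d := by
  unfold g
  have hsplit : Finset.range (d * e + 1) = insert 0 (Finset.Ico 1 (d * e + 1)) := by
    ext j
    simp [Finset.mem_range, Finset.mem_Ico]
    omega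
  rw [hsplit, Finset.sum_insert (by simp), hj_zero, Nat.sub_zero]
  congr 1
  have hbij : ∑ j ∈ Finset.Ico 1 (d * e + 1), (n + d - hj d e j).choose d
      = ∑ p ∈ Finset.Icc 1 d ×ˢ Finset.range e, (n + d - p.1).choose d := by
    apply Finset.sum_nbij' (fun j => (hj d e j, mj d e j)) (fun p => p.1 + d * p.2)
    · intro j hjmem
      rw [Finset.mem_Ico] at hjmem
      rw [Finset.mem_product, Finset.mem_Icc, Finset.mem_range]
      exact ⟨⟨hj_pos d e j hjmem.1, hj_le_d d e j (by omega)⟩,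
        mj_lt_e d e j he (by omega)⟩
    · intro p hp
      rw [Finset.mem_product, Finset.mem_Icc, Finset.mem_range] at hp
      rw [Finset.mem_Ico]
      constructor
      · omega
      · have h1 : p.1 ≤ d := hp.1.2
        have h2 : p.2 ≤ e - 1 := by omega
        have : d * p.2 ≤ d * (e - 1) := Nat.mul_le_mul_left _ h2
        have : d * (e-1) + d = d * e := by
          have : 1 ≤ e := he
          cases e with
          | zero => omega
          | succ e' => simp [Nat.mul_succ]
        omega
    · intro j hjmem
      have := hj_add_dmj d e j
      simp only []
      omega
    · intro p hp
      rw [Finset.mem_product, Finset.mem_Icc, Finset.mem_range] at hp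
      have hm := mj_spec d e p.1 p.2 he hp.1.1 hp.1.2 hp.2
      have hh := hj_spec d e p.1 p.2 he hp.1.1 hp.1.2 hp.2
      simp [hm, hh]
    · intro j _
      rfl
  rw [hbij, Finset.sum_product, Finset.mul_sum]
  apply Finset.sum_congr rfl
  intro h _
  simp [Finset.sum_const, Finset.card_range, mul_comm]



lemma card_adt_succ (k n : ℕ) :
    (Finset.Nat.antidiagonalTuple (k+1) n).card
      = ∑ p ∈ Finset.HasAntidiagonal.antidiagonal n, (Finset.Nat.antidiagonalTuple k p.2).card := by
  rw [← Finset.card_sigma]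
  refine (Finset.card_bij'
    (fun (a : Σ _p : ℕ × ℕ, Fin k → ℕ) _ => (Fin.cons a.1.1 a.2 : Fin (k+1) → ℕ))
    (fun y _ => ⟨(y 0, ∑ i : Fin k, y i.succ), Fin.tail y⟩) ?_ ?_ ?_ ?_).symm
  · intro a ha
    rw [Finset.mem_sigma] at ha
    have h1 := Finset.HasAntidiagonal.mem_antidiagonal.mp ha.1
    have h2 := Finset.Nat.mem_antidiagonalTuple.mp ha.2
    rw [Finset.Nat.mem_antidiagonalTuple, Fin.sum_cons, h2, h1]
  · intro y hy
    have hy' := Finset.Nat.mem_antidiagonalTuple.mp hy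
    rw [Finset.mem_sigma]
    refine ⟨Finset.HasAntidiagonal.mem_antidiagonal.mpr ?_, Finset.Nat.mem_antidiagonalTuple.mpr rfl⟩
    show y 0 + ∑ i : Fin k, y i.succ = n
    rw [Fin.sum_univ_succ] at hy'
    exact hy'
  · intro a ha
    rw [Finset.mem_sigma] at ha
    have h2 := Finset.Nat.mem_antidiagonalTuple.mp ha.2
    obtain ⟨⟨p1, p2⟩, x⟩ := a
    simp only [Fin.cons_zero, Fin.cons_succ, Fin.tail_cons]
    simp only at h2
    simp [h2]
  · intro y _
    exact Fin.cons_self_tail y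

lemma card_adt (k : ℕ) : ∀ n, (Finset.Nat.antidiagonalTuple (k+1) n).card = (n + k).choose k := by
  induction k with
  | zero => intro n; simp
  | succ k ih =>
    intro n
    rw [card_adt_succ, Finset.Nat.sum_antidiagonal_eq_sum_range_succ_mk]
    have hc : ∀ i ∈ Finset.range (n+1), (Finset.Nat.antidiagonalTuple (k+1) (i, n - i).2).card
        = ((n - i) + k).choose k := fun i _ => ih (n - i)
    rw [Finset.sum_congr rfl hc]
    have hrefl := Finset.sum_range_reflect (fun i => (i + k).choose k) (n+1)
    simp only [Nat.add_sub_cancel] at hrefl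
    calc ∑ i ∈ Finset.range (n+1), ((n - i) + k).choose k
        = ∑ i ∈ Finset.range (n+1), (i + k).choose k := hrefl
      _ = (n + k + 1).choose (k+1) := Nat.sum_range_add_choose n k
      _ = (n + (k+1)).choose (k+1) := by rw [Nat.add_assoc]

/-- The inequality description of the lattice points of `n • P`. -/
def Sset (d e n : ℕ) : Set (Fin d → ℤ) :=
  {x | (∑ i, x i) ≤ (n:ℤ) ∧ ∀ i, 0 ≤ ((d:ℤ)*e+1) * x i + e * ((n:ℤ) - ∑ i, x i)}

def Bfin (d e n : ℕ) : Finset ((_ : ℕ) × (Fin (d+1) → ℕ)) :=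
  (Finset.range (d*e+1)).sigma (fun j =>
    if hj d e j ≤ n then Finset.Nat.antidiagonalTuple (d+1) (n - hj d e j) else ∅)

def phi (d e : ℕ) (p : (_ : ℕ) × (Fin (d+1) → ℕ)) : Fin d → ℤ :=
  fun i => (p.2 i.succ : ℤ) - mj d e p.1 - e * p.2 0

lemma mem_Bfin {d e n : ℕ} {p : (_ : ℕ) × (Fin (d+1) → ℕ)} :
    p ∈ Bfin d e n ↔ p.1 < d*e+1 ∧ hj d e p.1 ≤ n ∧ (∑ i, p.2 i) = n - hj d e p.1 := by
  unfold Bfin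
  rw [Finset.mem_sigma, Finset.mem_range]
  constructor
  · rintro ⟨h1, h2⟩
    by_cases hc : hj d e p.1 ≤ n
    · rw [if_pos hc, Finset.Nat.mem_antidiagonalTuple] at h2
      exact ⟨h1, hc, h2⟩
    · rw [if_neg hc] at h2
      exact absurd h2 (Finset.notMem_empty _)
  · rintro ⟨h1, h2, h3⟩
    refine ⟨h1, ?_⟩
    rw [if_pos h2, Finset.Nat.mem_antidiagonalTuple]
    exact h3

lemma sum_phi {d e n : ℕ} {p : (_ : ℕ) × (Fin (d+1) → ℕ)} (hp : p ∈ Bfin d e n) :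
    ∑ i, phi d e p i = (n:ℤ) - p.1 - ((d:ℤ)*e+1) * p.2 0 := by
  obtain ⟨h1, h2, h3⟩ := mem_Bfin.mp hp
  obtain ⟨j, c⟩ := p
  simp only at h1 h2 h3
  show ∑ i : Fin d, ((c i.succ : ℤ) - (mj d e j : ℤ) - (e:ℤ) * c 0)
      = (n:ℤ) - (j:ℤ) - ((d:ℤ)*e+1) * c 0
  have hs1 : ∑ i : Fin d, ((c i.succ : ℤ) - (mj d e j : ℤ) - (e:ℤ) * c 0)
      = (∑ i : Fin d, (c i.succ : ℤ)) - (d:ℤ) * (mj d e j) - (d:ℤ) * ((e:ℤ) * c 0) := by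
    rw [Finset.sum_sub_distrib, Finset.sum_sub_distrib, Finset.sum_const, Finset.sum_const,
      Finset.card_univ, Fintype.card_fin]
    push_cast
    ring
  have hs2 : (∑ i : Fin (d+1), (c i : ℤ)) = (c 0 : ℤ) + ∑ i : Fin d, (c i.succ : ℤ) :=
    Fin.sum_univ_succ _
  have hs3 : (∑ i : Fin (d+1), (c i : ℤ)) = (n:ℤ) - hj d e j := by
    have hcast : ((∑ i : Fin (d+1), c i : ℕ) : ℤ) = ((n - hj d e j : ℕ) : ℤ) := by
      exact Nat.cast_inj.mpr h3
    push_cast at hcast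
    rw [Nat.cast_sub h2] at hcast
    convert hcast using 2
  have hs4 : (hj d e j : ℤ) + (d:ℤ) * mj d e j = (j:ℤ) := by
    exact_mod_cast hj_add_dmj d e j
  have hring : ((d:ℤ)*e+1) * c 0 = (d:ℤ) * ((e:ℤ) * c 0) + (c 0 : ℤ) := by ring
  rw [hs1]
  have hs5 : ∑ i : Fin d, (c i.succ : ℤ) = ((n:ℤ) - hj d e j) - (c 0 : ℤ) := by
    rw [← hs3, hs2]; ring
  rw [hs5]
  linarith [hs4, hring]

lemma phi_mem {d e n : ℕ} {p : (_ : ℕ) × (Fin (d+1) → ℕ)} (hp : p ∈ Bfin d e n) :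
    phi d e p ∈ Sset d e n := by
  obtain ⟨h1, h2, h3⟩ := mem_Bfin.mp hp
  have hsum := sum_phi hp
  constructor
  · rw [hsum]
    have hpos : (0:ℤ) ≤ ((d:ℤ)*e+1) * p.2 0 := by positivity
    have hj0 : (0:ℤ) ≤ (p.1:ℤ) := Int.natCast_nonneg _
    linarith
  · intro i
    rw [hsum]
    have hkey : ((d:ℤ)*e+1) * phi d e p i
          + (e:ℤ) * ((n:ℤ) - ((n:ℤ) - (p.1:ℤ) - ((d:ℤ)*e+1) * p.2 0))
        = ((d:ℤ)*e+1) * (p.2 i.succ : ℤ)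
          + ((e:ℤ) * p.1 - ((mj d e p.1 : ℤ)) * ((d:ℤ)*e+1)) := by
      unfold phi
      push_cast
      ring
    rw [hkey]
    have hb : ((mj d e p.1 : ℤ)) * ((d:ℤ)*e+1) ≤ (e:ℤ) * p.1 := by
      exact_mod_cast mj_mul_le d e p.1
    have hnn : (0:ℤ) ≤ ((d:ℤ)*e+1) * (p.2 i.succ : ℤ) := by positivity
    linarith

lemma phi_injOn {d e n : ℕ} : Set.InjOn (phi d e) (Bfin d e n : Set ((_ : ℕ) × (Fin (d+1) → ℕ))) := by
  intro p hp p' hp' heq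
  rw [Finset.mem_coe] at hp hp'
  obtain ⟨h1, h2, h3⟩ := mem_Bfin.mp hp
  obtain ⟨h1', h2', h3'⟩ := mem_Bfin.mp hp'
  have hsum : (n:ℤ) - p.1 - ((d:ℤ)*e+1) * p.2 0 = (n:ℤ) - p'.1 - ((d:ℤ)*e+1) * p'.2 0 := by
    rw [← sum_phi hp, ← sum_phi hp', heq]
  have hz : ((p.1:ℤ) + ((d*e+1 : ℕ):ℤ) * p.2 0 = (p'.1:ℤ) + ((d*e+1:ℕ):ℤ) * p'.2 0) := by
    push_cast
    linarith
  have hnat : p.1 + (d*e+1) * p.2 0 = p'.1 + (d*e+1) * p'.2 0 := by exact_mod_cast hz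
  have hjj : p.1 = p'.1 := by
    have hmod := congrArg (fun t => t % (d*e+1)) hnat
    simpa [Nat.add_mul_mod_self_left, Nat.mod_eq_of_lt h1, Nat.mod_eq_of_lt h1'] using hmod
  have hc0 : p.2 0 = p'.2 0 := by
    rw [hjj] at hnat
    have := Nat.add_left_cancel hnat
    exact Nat.eq_of_mul_eq_mul_left (by omega) this
  have hcs : ∀ i : Fin d, p.2 i.succ = p'.2 i.succ := by
    intro i
    have hfi := congrFun heq i
    unfold phi at hfi
    rw [hjj, hc0] at hfi
    have : ((p.2 i.succ : ℕ) : ℤ) = ((p'.2 i.succ : ℕ) : ℤ) := by linarith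
    exact_mod_cast this
  obtain ⟨j, c⟩ := p
  obtain ⟨j', c'⟩ := p'
  simp only at hjj hc0 hcs
  subst hjj
  congr 1
  funext i
  refine Fin.cases ?_ ?_ i
  · exact hc0
  · exact hcs

lemma Sset_subset_image {d e n : ℕ} :
    Sset d e n ⊆ phi d e '' (Bfin d e n : Set ((_ : ℕ) × (Fin (d+1) → ℕ))) := by
  intro x hx
  obtain ⟨hx1, hx2⟩ := hx
  set s : ℤ := ∑ i, x i with hs
  set q : ℕ := ((n:ℤ) - s).toNat with hqdef
  have hq : (q:ℤ) = (n:ℤ) - s := Int.toNat_of_nonneg (by linarith)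
  set j : ℕ := q % (d*e+1) with hjdef
  set c0 : ℕ := q / (d*e+1) with hc0def
  have hqd : q = j + (d*e+1) * c0 := by rw [hjdef, hc0def, Nat.mod_add_div]
  have hjlt : j < d*e+1 := Nat.mod_lt _ (by omega)
  set m : ℕ := mj d e j with hmdef
  have hq2 : (n:ℤ) - s = (j:ℤ) + ((d:ℤ)*e+1) * c0 := by
    rw [← hq]
    have : ((q:ℕ):ℤ) = ((j + (d*e+1) * c0 : ℕ) : ℤ) := Nat.cast_inj.mpr hqd
    push_cast at this
    linarith
  have hmle : (m:ℤ) * ((d:ℤ)*e+1) ≤ (e:ℤ)*j := by exact_mod_cast mj_mul_le d e j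
  have hmlt : (e:ℤ)*j < ((m:ℤ)+1) * ((d:ℤ)*e+1) := by exact_mod_cast lt_mj_succ_mul d e j
  have hdpos : (0:ℤ) < (d:ℤ)*e+1 := by positivity
  have hnn : ∀ i : Fin d, 0 ≤ x i + m + e * c0 := by
    intro i
    have h2 := hx2 i
    have hexp : ((d:ℤ)*e+1)*(x i + (m:ℤ) + (e:ℤ)*c0)
        = ((d:ℤ)*e+1)*x i + ((d:ℤ)*e+1)*m + (e:ℤ)*(((d:ℤ)*e+1)*c0) := by ring
    have hm1 : ((m:ℤ)+1)*((d:ℤ)*e+1) = ((d:ℤ)*e+1)*m + ((d:ℤ)*e+1) := by ring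
    have he2 : (e:ℤ)*((n:ℤ)-s) = (e:ℤ)*j + (e:ℤ)*(((d:ℤ)*e+1)*c0) := by rw [hq2]; ring
    have hm2 : ((d:ℤ)*e+1)*m = (m:ℤ)*((d:ℤ)*e+1) := by ring
    have key : (0:ℤ) < ((d:ℤ)*e+1) * (x i + (m:ℤ) + (e:ℤ)*c0) + ((d:ℤ)*e+1) := by
      linarith
    by_contra hneg
    push_neg at hneg
    have ht : x i + (m:ℤ) + (e:ℤ)*c0 ≤ -1 := by linarith
    have := mul_le_mul_of_nonneg_left ht (le_of_lt hdpos)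
    linarith
  refine ⟨⟨j, Fin.cons c0 (fun i => (x i + m + e * c0).toNat)⟩, ?_, ?_⟩
  · rw [Finset.mem_coe, mem_Bfin]
    refine ⟨hjlt, ?_⟩
    have hcsucc : ∀ i : Fin d,
        (((Fin.cons c0 (fun i => (x i + m + e * c0).toNat) : Fin (d+1) → ℕ) i.succ : ℤ))
          = x i + m + e*c0 := by
      intro i
      rw [Fin.cons_succ]
      exact Int.toNat_of_nonneg (hnn i)
    have hsum1 : ((∑ i : Fin (d+1), (Fin.cons c0 (fun i => (x i + m + e * c0).toNat) : Fin (d+1) → ℕ) i : ℕ) : ℤ)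
        = (n:ℤ) - (hj d e j : ℤ) := by
      push_cast
      rw [Fin.sum_univ_succ, Fin.cons_zero]
      have htail : ∑ i : Fin d,
          (((Fin.cons c0 (fun i => (x i + m + e * c0).toNat) : Fin (d+1) → ℕ) i.succ : ℕ) : ℤ)
            = s + (d:ℤ)*m + (d:ℤ)*((e:ℤ)*c0) := by
        rw [Finset.sum_congr rfl (fun i _ => hcsucc i), Finset.sum_add_distrib,
          Finset.sum_add_distrib, Finset.sum_const, Finset.sum_const, Finset.card_univ,
          Fintype.card_fin]
        push_cast
        rw [hs]
        ring
      rw [htail]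
      have hs4 : (hj d e j : ℤ) + (d:ℤ) * m = (j:ℤ) := by
        rw [hmdef]
        exact_mod_cast hj_add_dmj d e j
      have : (c0:ℤ) + (s + (d:ℤ)*m + (d:ℤ)*((e:ℤ)*c0)) = s + (d:ℤ)*m + ((d:ℤ)*e+1)*c0 := by ring
      rw [this]
      linarith [hq2, hs4]
    have hjn : hj d e j ≤ n := by
      have hge : (0:ℤ) ≤ (n:ℤ) - (hj d e j : ℤ) := by
        rw [← hsum1]
        positivity
      exact_mod_cast (by linarith : ((hj d e j : ℤ)) ≤ (n:ℤ))
    refine ⟨hjn, ?_⟩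
    have : ((∑ i : Fin (d+1), (Fin.cons c0 (fun i => (x i + m + e * c0).toNat) : Fin (d+1) → ℕ) i : ℕ) : ℤ)
        = ((n - hj d e j : ℕ) : ℤ) := by
      rw [hsum1, Nat.cast_sub hjn]
    exact_mod_cast this
  · funext i
    unfold phi
    simp only [Fin.cons_succ, Fin.cons_zero]
    rw [Int.toNat_of_nonneg (hnn i)]
    ring

lemma Sset_ncard {d e n : ℕ} (hd : 1 ≤ d) : (Sset d e n).ncard = g d e n := by
  have himg : Sset d e n = phi d e '' (Bfin d e n : Set ((_ : ℕ) × (Fin (d+1) → ℕ))) := by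
    apply Set.Subset.antisymm Sset_subset_image
    rintro x ⟨p, hp, rfl⟩
    exact phi_mem (Finset.mem_coe.mp hp)
  rw [himg, Set.ncard_image_of_injOn phi_injOn, Set.ncard_coe_finset]
  unfold Bfin g
  rw [Finset.card_sigma]
  apply Finset.sum_congr rfl
  intro j hjm
  by_cases hc : hj d e j ≤ n
  · rw [if_pos hc, card_adt]
    congr 1
    omega
  · rw [if_neg hc]
    simp only [Finset.card_empty]
    symm
    apply Nat.choose_eq_zero_of_lt
    omega
lemma smul_P_eq (d e : ℕ) (he : 1 ≤ e)
    (v : Fin (d + 1) → Fin d → ℝ)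
    (hv0 : v 0 = fun _ => -(e : ℝ))
    (hvi : ∀ i : Fin d, v i.succ = fun j => if j = i then 1 else 0)
    (n : ℕ) (hn : 1 ≤ n) :
    (n : ℝ) • convexHull ℝ (Set.range v)
      = {y : Fin d → ℝ | (∑ i, y i) ≤ (n:ℝ) ∧
          ∀ i, 0 ≤ ((d:ℝ)*e+1) * y i + (e:ℝ) * ((n:ℝ) - ∑ i, y i)} := by
  rw [← convexHull_smul, Set.smul_set_range]
  apply Set.Subset.antisymm
  · apply convexHull_min
    · rintro y ⟨i, rfl⟩
      dsimp only
      refine Fin.cases ?_ ?_ i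
      · -- vertex v 0
        have hy : ∀ j, ((n:ℝ) • v 0) j = (n:ℝ) * (-(e:ℝ)) := by
          intro j; simp [hv0]
        have hsum : ∑ j, ((n:ℝ) • v 0) j = (d:ℝ) * ((n:ℝ) * (-(e:ℝ))) := by
          rw [Finset.sum_congr rfl (fun j _ => hy j), Finset.sum_const, Finset.card_univ,
            Fintype.card_fin, nsmul_eq_mul]
        constructor
        · rw [hsum]
          have h1 : (0:ℝ) ≤ (d:ℝ) * ((n:ℝ) * (e:ℝ)) := by positivity
          have h2 : (0:ℝ) ≤ (n:ℝ) := by positivity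
          nlinarith
        · intro i
          rw [hsum, hy i]
          have : ((d:ℝ)*e+1) * ((n:ℝ) * (-(e:ℝ)))
              + (e:ℝ) * ((n:ℝ) - (d:ℝ) * ((n:ℝ) * (-(e:ℝ)))) = 0 := by ring
          rw [this]
      · -- vertex v k.succ
        intro k
        have hy : ∀ j, ((n:ℝ) • v k.succ) j = (n:ℝ) * (if j = k then (1:ℝ) else 0) := by
          intro j; simp [hvi k]
        have hsum : ∑ j, ((n:ℝ) • v k.succ) j = (n:ℝ) := by
          rw [Finset.sum_congr rfl (fun j _ => hy j)]
          simp [mul_ite]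
        constructor
        · rw [hsum]
        · intro i
          rw [hsum, hy i]
          simp only [sub_self, mul_zero, add_zero]
          by_cases hik : i = k
          · simp only [hik, if_pos rfl, mul_one]
            positivity
          · simp [hik]
    · -- convexity of the halfspace intersection
      intro y hy z hz a b ha hb hab
      obtain ⟨hy1, hy2⟩ := hy
      obtain ⟨hz1, hz2⟩ := hz
      have hsum : ∑ i, (a • y + b • z) i = a * (∑ i, y i) + b * (∑ i, z i) := by
        simp only [Pi.add_apply, Pi.smul_apply, smul_eq_mul]
        rw [Finset.sum_add_distrib, Finset.mul_sum, Finset.mul_sum]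
      constructor
      · rw [hsum]
        nlinarith
      · intro i
        have happ : (a • y + b • z) i = a * y i + b * z i := by
          simp [Pi.add_apply, Pi.smul_apply, smul_eq_mul]
        rw [hsum, happ]
        have key : ((d:ℝ)*e+1) * (a * y i + b * z i)
              + (e:ℝ) * ((n:ℝ) - (a * (∑ i, y i) + b * (∑ i, z i)))
            = a * (((d:ℝ)*e+1) * y i + (e:ℝ) * ((n:ℝ) - ∑ i, y i))
              + b * (((d:ℝ)*e+1) * z i + (e:ℝ) * ((n:ℝ) - ∑ i, z i)) := by
          linear_combination (-(e:ℝ) * (n:ℝ)) * hab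
        rw [key]
        have := add_nonneg (mul_nonneg ha (hy2 i)) (mul_nonneg hb (hz2 i))
        linarith
  · -- reverse inclusion
    intro y hy
    obtain ⟨hy1, hy2⟩ := hy
    set Sy : ℝ := ∑ i, y i with hSy
    set D : ℝ := (d:ℝ)*e+1 with hD
    have hDpos : 0 < D := by rw [hD]; positivity
    have hNpos : (0:ℝ) < n := by exact_mod_cast hn
    have hND : 0 < (n:ℝ) * D := by positivity
    set w : Fin (d+1) → ℝ :=
      Fin.cons (((n:ℝ) - Sy)/((n:ℝ)*D)) (fun k => (D * y k + (e:ℝ)*((n:ℝ) - Sy))/((n:ℝ)*D))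
      with hw
    have hw0 : ∀ i, 0 ≤ w i := by
      intro i
      refine Fin.cases ?_ ?_ i
      · rw [hw, Fin.cons_zero]
        apply div_nonneg _ (le_of_lt hND)
        linarith
      · intro k
        rw [hw, Fin.cons_succ]
        apply div_nonneg _ (le_of_lt hND)
        exact hy2 k
    have hw1 : ∑ i, w i = 1 := by
      rw [Fin.sum_univ_succ]
      rw [hw]
      simp only [Fin.cons_zero, Fin.cons_succ]
      rw [← Finset.sum_div]
      have : ∑ k : Fin d, (D * y k + (e:ℝ)*((n:ℝ) - Sy))
          = D * Sy + (d:ℝ) * ((e:ℝ)*((n:ℝ) - Sy)) := by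
        rw [Finset.sum_add_distrib, ← Finset.mul_sum, Finset.sum_const, Finset.card_univ,
          Fintype.card_fin, nsmul_eq_mul, hSy]
      rw [this]
      rw [hD]
      field_simp
      ring
    have hcomb : ∑ i, w i • ((n:ℝ) • v i) = y := by
      funext j
      have happ : (∑ i, w i • ((n:ℝ) • v i)) j = ∑ i, w i * ((n:ℝ) * v i j) := by
        rw [Finset.sum_apply]
        apply Finset.sum_congr rfl
        intro i _
        simp [mul_assoc]
      rw [happ, Fin.sum_univ_succ]
      rw [hw]
      simp only [Fin.cons_zero, Fin.cons_succ]
      have hv0j : v 0 j = -(e:ℝ) := by rw [hv0]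
      have htail : ∑ k : Fin d, (D * y k + (e:ℝ)*((n:ℝ) - Sy))/((n:ℝ)*D) * ((n:ℝ) * v k.succ j)
          = (D * y j + (e:ℝ)*((n:ℝ) - Sy))/((n:ℝ)*D) * (n:ℝ) := by
        have hvs : ∀ k : Fin d, v k.succ j = if j = k then (1:ℝ) else 0 := by
          intro k; rw [hvi k]
        rw [Finset.sum_congr rfl (fun k _ => by rw [hvs k])]
        rw [Finset.sum_congr rfl (fun k _ => ?_)]
        · rw [Finset.sum_ite_eq Finset.univ j
            (fun k => (D * y k + (e:ℝ)*((n:ℝ) - Sy))/((n:ℝ)*D) * (n:ℝ))]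
          simp
        · show (D * y _ + (e:ℝ)*((n:ℝ) - Sy))/((n:ℝ)*D) * ((n:ℝ) * (if j = _ then (1:ℝ) else 0))
            = if j = _ then (D * y _ + (e:ℝ)*((n:ℝ) - Sy))/((n:ℝ)*D) * (n:ℝ) else 0
          split <;> ring
      rw [htail, hv0j]
      rw [hD]
      field_simp
      ring
    have hmem := Finset.centerMass_mem_convexHull (Finset.univ (α := Fin (d+1)))
      (fun i _ => hw0 i) (by rw [hw1]; norm_num)
      (fun i _ => Set.mem_range_self (f := fun i => (n:ℝ) • v i) i)
    rw [Finset.centerMass_eq_of_sum_1 _ _ hw1, hcomb] at hmem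
    exact hmem
lemma lattice_eq (d e : ℕ) (he : 1 ≤ e)
    (v : Fin (d + 1) → Fin d → ℝ)
    (hv0 : v 0 = fun _ => -(e : ℝ))
    (hvi : ∀ i : Fin d, v i.succ = fun j => if j = i then 1 else 0)
    (P : Set (Fin d → ℝ)) (hP : P = convexHull ℝ (Set.range v))
    (n : ℕ) (hn : 1 ≤ n) :
    latticePoints ((n:ℝ) • P) = Sset d e n := by
  rw [hP, smul_P_eq d e he v hv0 hvi n hn]
  ext x
  simp only [latticePoints, Set.mem_setOf_eq, Sset]
  have hc : (∑ i, ((x i : ℝ))) = ((∑ i, x i : ℤ) : ℝ) := by push_cast; rfl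
  constructor
  · rintro ⟨h1, h2⟩
    rw [hc] at h1 h2
    constructor
    · exact_mod_cast h1
    · intro i
      have := h2 i
      exact_mod_cast this
  · rintro ⟨h1, h2⟩
    rw [hc]
    constructor
    · exact_mod_cast h1
    · intro i
      exact_mod_cast h2 i

lemma ehrhart_pos (d e : ℕ) (hd : 1 ≤ d) (he : 1 ≤ e)
    (v : Fin (d + 1) → Fin d → ℝ)
    (hv0 : v 0 = fun _ => -(e : ℝ))
    (hvi : ∀ i : Fin d, v i.succ = fun j => if j = i then 1 else 0)
    (P : Set (Fin d → ℝ)) (hP : P = convexHull ℝ (Set.range v))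
    (n : ℕ) (hn : 1 ≤ n) :
    ehrhart P n = ((g d e n : ℕ) : ℤ) := by
  unfold ehrhart
  rw [lattice_eq d e he v hv0 hvi P hP n hn, Sset_ncard hd]

lemma g_zero (d e : ℕ) (hd : 1 ≤ d) (he : 1 ≤ e) : g d e 0 = 1 := by
  rw [g_eq d e 0 hd he]
  have h0 : ∀ h ∈ Finset.Icc 1 d, (0 + d - h).choose d = 0 := by
    intro h hh
    rw [Finset.mem_Icc] at hh
    apply Nat.choose_eq_zero_of_lt
    omega
  rw [Finset.sum_congr rfl h0]
  simp

lemma ehrhart_zero {d : ℕ} (P : Set (Fin d → ℝ)) (hPne : P.Nonempty) : ehrhart P 0 = 1 := by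
  unfold ehrhart
  have h0 : ((0:ℕ):ℝ) = 0 := by norm_num
  rw [h0, Set.zero_smul_set hPne]
  have hl : latticePoints (0 : Set (Fin d → ℝ)) = {0} := by
    ext x
    simp only [latticePoints, Set.mem_setOf_eq, Set.mem_zero, Set.mem_singleton_iff]
    constructor
    · intro hx
      funext i
      have := congrFun hx i
      simpa using this
    · rintro rfl
      funext i
      simp
  rw [hl, Set.ncard_singleton]
  norm_num

lemma delta_master (d e : ℕ) (hd : 1 ≤ d) (he : 1 ≤ e)
    (v : Fin (d + 1) → Fin d → ℝ)
    (hv0 : v 0 = fun _ => -(e : ℝ))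
    (hvi : ∀ i : Fin d, v i.succ = fun j => if j = i then 1 else 0)
    (P : Set (Fin d → ℝ)) (hP : P = convexHull ℝ (Set.range v))
    (i : ℕ) (hi : i ≤ d) :
    deltaVec P d i = (if i = 0 then 1 else (e:ℤ)) := by
  have hPne : P.Nonempty := ⟨v 0, hP ▸ subset_convexHull ℝ _ (Set.mem_range_self 0)⟩
  have hEG : ∀ j, ehrhart P j = ((g d e j : ℕ) : ℤ) := by
    intro j
    cases j with
    | zero =>
      rw [ehrhart_zero P hPne, g_zero d e hd he]
      norm_num
    | succ j => exact ehrhart_pos d e hd he v hv0 hvi P hP (j+1) (by omega)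
  unfold deltaVec
  have hsum : ∑ j ∈ Finset.range (i+1), (-1:ℤ)^(i-j) * ((d+1).choose (i-j) : ℤ) * ehrhart P j
      = ∑ k ∈ Finset.range (i+1), (-1:ℤ)^k * ((d+1).choose k : ℤ)
          * (fun nn => ((g d e nn : ℕ) : ℤ)) (i-k) := by
    rw [← Finset.sum_range_reflect
      (fun k => (-1:ℤ)^k * ((d+1).choose k : ℤ) * (fun nn => ((g d e nn : ℕ) : ℤ)) (i-k)) (i+1)]
    apply Finset.sum_congr rfl
    intro j hj
    rw [Finset.mem_range] at hj
    have h1 : i + 1 - 1 - j = i - j := by omega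
    have h2 : i - (i - j) = j := by omega
    simp only [h1, h2]
    rw [hEG j]
  rw [hsum, sum_alt_eq_del_iter (d+1) (fun nn => ((g d e nn : ℕ) : ℤ)) i]
  have hGF : (fun nn => ((g d e nn : ℕ) : ℤ))
      = fun nn => ∑ h ∈ Finset.range (d+1), (if h = 0 then 1 else (e:ℤ)) * F h d nn := by
    funext nn
    rw [g_eq d e nn hd he]
    have hsplit : Finset.range (d+1) = insert 0 (Finset.Icc 1 d) := by
      ext a
      simp only [Finset.mem_range, Finset.mem_insert, Finset.mem_Icc]
      omega
    rw [hsplit, Finset.sum_insert (by simp)]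
    push_cast
    congr 1
    · simp only [if_pos rfl, one_mul]
      simp [F]
    · rw [Finset.mul_sum]
      apply Finset.sum_congr rfl
      intro h hh
      rw [Finset.mem_Icc] at hh
      rw [if_neg (by omega)]
      congr 1
      unfold F
      by_cases hc : h ≤ nn
      · rw [if_pos hc]
        congr 2
        omega
      · rw [if_neg hc]
        have hz : (nn + d - h).choose d = 0 := Nat.choose_eq_zero_of_lt (by omega)
        rw [hz]
        norm_num
  rw [hGF, Del_iter_sum]
  beta_reduce
  have hterm : ∀ h ∈ Finset.range (d+1),
      Del^[d+1] (fun nn => (if h = 0 then 1 else (e:ℤ)) * F h d nn) i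
        = if i = h then (if h = 0 then 1 else (e:ℤ)) else 0 := by
    intro h _
    rw [Del_iter_const_mul, del_iter_succ_F d h]
    simp only [mul_ite, mul_one, mul_zero]
  rw [Finset.sum_congr rfl hterm]
  rw [Finset.sum_ite_eq (Finset.range (d+1)) i (fun h => if h = 0 then 1 else (e:ℤ))]
  rw [if_pos (Finset.mem_range.mpr (by omega))]

end Stmt5Aux

theorem stmt5 (d e : ℕ) (hd : 1 ≤ d) (he : 1 ≤ e)
    (v : Fin (d + 1) → Fin d → ℝ)
    (hv0 : v 0 = fun _ => -(e : ℝ))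
    (hvi : ∀ i : Fin d, v i.succ = fun j => if j = i then 1 else 0)
    (P : Set (Fin d → ℝ)) (hP : P = convexHull ℝ (Set.range v)) :
    deltaVec P d 0 = 1 ∧ ∀ i, 1 ≤ i → i ≤ d → deltaVec P d i = (e : ℤ) := by
  constructor
  · have := Stmt5Aux.delta_master d e hd he v hv0 hvi P hP 0 (by omega)
    simpa using this
  · intro i h1 h2
    have := Stmt5Aux.delta_master d e hd he v hv0 hvi P hP i h2
    rw [if_neg (by omega)] at this
    exact this
end
end

section
/- Let P ⊂ R^d be a d-simplex with integer vertices v_0,...,v_d. The δ-vector of P is shifted symmetric (δ_{d−i} = δ_{i+1} for 0 ≤ i ≤ ⌊(d−1)/2⌋) if and only if every facet of P has normalized volume 1 (i.e., is a unimodular (d−1)-simplex). -/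
open scoped BigOperators Pointwise

noncomputable section

open Finset

open Finset

lemma coeff_one_sub_pow (N k : ℕ) :
    (PowerSeries.coeff k) ((1 - PowerSeries.X) ^ N) = (-1) ^ k * (N.choose k : ℤ) := by
  have hpoly : (1 - Polynomial.X : Polynomial ℤ) ^ N =
      ((-1 : Polynomial ℤ)) ^ N * (Polynomial.X + Polynomial.C (-1)) ^ N := by
    rw [← mul_pow]; ring_nf; simp [Polynomial.C_neg]; ring_nf
  have h : ((1 - Polynomial.X : Polynomial ℤ) ^ N).coeff k = (-1) ^ k * (N.choose k : ℤ) := by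
    rw [hpoly]
    rcases le_or_gt k N with hk | hk
    · rw [show (-1 : Polynomial ℤ) ^ N = Polynomial.C ((-1 : ℤ) ^ N) by simp]
      rw [Polynomial.coeff_C_mul, Polynomial.coeff_X_add_C_pow]
      have : (-1 : ℤ) ^ N * (-1) ^ (N - k) = (-1) ^ k := by
        rw [← pow_add]
        have : N + (N - k) = 2 * (N - k) + k := by omega
        rw [this, pow_add, pow_mul]
        simp
      rw [← mul_assoc, this]
    · rw [Nat.choose_eq_zero_of_lt hk]
      have h2 : ((Polynomial.X + Polynomial.C (-1 : ℤ)) ^ N).coeff k = 0 := by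
        rw [Polynomial.coeff_X_add_C_pow, Nat.choose_eq_zero_of_lt hk]
        simp
      rw [show (-1 : Polynomial ℤ) ^ N = Polynomial.C ((-1 : ℤ) ^ N) by simp]
      rw [Polynomial.coeff_C_mul, h2]
      simp
  calc (PowerSeries.coeff k) ((1 - PowerSeries.X) ^ N)
      = (PowerSeries.coeff k) (((1 - Polynomial.X : Polynomial ℤ) ^ N : Polynomial ℤ) : PowerSeries ℤ) := by
        push_cast
        norm_cast
    _ = (-1) ^ k * (N.choose k : ℤ) := by rw [Polynomial.coeff_coe, h]

lemma key_ident (s m : ℕ) :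
    ∑ a ∈ Finset.range (m + 1),
      (-1 : ℤ) ^ (m - a) * ((s + 1).choose (m - a) : ℤ) * ((a + s).choose s : ℤ) =
      if m = 0 then 1 else 0 := by
  have h1 := PowerSeries.mk_add_choose_mul_one_sub_pow_eq_one ℤ s
  have h2 := congrArg (PowerSeries.coeff m) h1
  rw [PowerSeries.coeff_mul, Finset.Nat.sum_antidiagonal_eq_sum_range_succ_mk] at h2
  simp only [PowerSeries.coeff_mk, coeff_one_sub_pow, PowerSeries.coeff_one] at h2
  rw [← h2]
  apply Finset.sum_congr rfl
  intro a _
  have : s + a = a + s := by omega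
  rw [this]; ring

lemma card_piAntidiag {ι : Type*} [DecidableEq ι] (s : Finset ι) (hs : s.Nonempty) (n : ℕ) :
    (Finset.piAntidiag s n).card = (n + (s.card - 1)).choose (s.card - 1) := by
  induction hs using Finset.Nonempty.cons_induction generalizing n with
  | singleton a =>
      simp only [Finset.card_singleton, Nat.sub_self, Nat.choose_zero_right]
      rw [Finset.card_eq_one]
      refine ⟨fun j => if j = a then n else 0, ?_⟩
      ext f
      simp only [Finset.mem_piAntidiag, Finset.mem_singleton, Finset.sum_singleton]
      constructor
      · rintro ⟨rfl, hf⟩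
        ext j
        by_cases hj : j = a
        · subst hj; simp
        · simp [hj]
          by_contra h
          exact hj (hf j h)
      · rintro rfl
        constructor
        · simp
        · intro i hi
          by_contra h
          simp [h] at hi
  | cons a t ha ht ih =>
      rw [Finset.piAntidiag_cons ha n, Finset.card_disjiUnion]
      have hc : 1 ≤ t.card := Finset.card_pos.mpr ht
      calc ∑ p ∈ Finset.HasAntidiagonal.antidiagonal n,
            ((Finset.piAntidiag t p.2).map _).card
          = ∑ p ∈ Finset.HasAntidiagonal.antidiagonal n, (p.2 + (t.card - 1)).choose (t.card - 1) := by
            apply Finset.sum_congr rfl; intro p _; rw [Finset.card_map, ih]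
        _ = ∑ k ∈ Finset.range (n + 1), ((n - k) + (t.card - 1)).choose (t.card - 1) := by
            rw [Finset.Nat.sum_antidiagonal_eq_sum_range_succ_mk]
        _ = ∑ k ∈ Finset.range (n + 1), (k + (t.card - 1)).choose (t.card - 1) := by
            rw [← Finset.sum_range_reflect]
            apply Finset.sum_congr rfl
            intro k hk
            simp only [Finset.mem_range] at hk
            congr 2
            omega
        _ = ∑ m ∈ Finset.Icc (t.card - 1) (n + (t.card - 1)), m.choose (t.card - 1) := by
            rw [show Finset.Icc (t.card - 1) (n + (t.card - 1)) =
                Finset.Ico (t.card - 1) (n + (t.card - 1) + 1) by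
              rw [Finset.Ico_add_one_right_eq_Icc]]
            rw [Finset.sum_Ico_eq_sum_range]
            have : n + (t.card - 1) + 1 - (t.card - 1) = n + 1 := by omega
            rw [this]
            apply Finset.sum_congr rfl
            intro k _
            congr 1
            omega
        _ = (n + (t.card - 1) + 1).choose ((t.card - 1) + 1) := Nat.sum_Icc_choose _ _
        _ = (n + ((Finset.cons a t ha).card - 1)).choose ((Finset.cons a t ha).card - 1) := by
            rw [Finset.card_cons]
            congr 1 <;> omega

namespace Stmt8

variable {d : ℕ} (v : Fin (d + 1) → Fin d → ℤ)

def W : Fin (d + 1) → Fin d → ℝ := fun j i => (v j i : ℝ)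

def box (S : Finset (Fin (d + 1))) : Set (Fin (d + 1) → ℝ) :=
  {r | (∀ j, 0 ≤ r j ∧ r j < 1) ∧ (∀ j, j ∉ S → r j = 0) ∧
    (∃ m : ℤ, ∑ j, r j = (m : ℝ)) ∧ ∀ i, ∃ z : ℤ, ∑ j, r j * W v j i = (z : ℝ)}

def ht (r : Fin (d + 1) → ℝ) : ℕ := ⌊∑ j, r j⌋₊

lemma zero_mem_box (S : Finset (Fin (d + 1))) : (0 : Fin (d + 1) → ℝ) ∈ box v S := by
  refine ⟨fun j => by norm_num, fun j _ => rfl, ⟨0, by simp⟩, fun i => ⟨0, by simp⟩⟩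

lemma ht_cast {S : Finset (Fin (d + 1))} {r : Fin (d + 1) → ℝ} (hr : r ∈ box v S) :
    ((ht r : ℝ)) = ∑ j, r j := by
  obtain ⟨hb, -, ⟨m, hm⟩, -⟩ := hr
  have hm0 : 0 ≤ (m : ℝ) := hm ▸ Finset.sum_nonneg fun j _ => (hb j).1
  have hm0' : (0 : ℤ) ≤ m := by exact_mod_cast hm0
  have h1 : ⌊(m : ℝ)⌋₊ = m.toNat := by rw [← Int.floor_toNat, Int.floor_intCast]
  rw [ht, hm, h1]
  exact_mod_cast Int.toNat_of_nonneg hm0'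

lemma ht_zero : ht (0 : Fin (d + 1) → ℝ) = 0 := by simp [ht]

lemma eq_zero_of_ht_eq_zero {S : Finset (Fin (d + 1))} {r : Fin (d + 1) → ℝ}
    (hr : r ∈ box v S) (h : ht r = 0) : r = 0 := by
  have h2 : ∑ j, r j = 0 := by
    have := ht_cast v hr
    rw [h] at this
    simpa using this.symm
  have := (Finset.sum_eq_zero_iff_of_nonneg (fun j _ => (hr.1 j).1)).mp h2
  funext j
  exact this j (Finset.mem_univ j)

lemma weights_unique (hv : AffineIndependent ℝ (W v)) {lam mu : Fin (d + 1) → ℝ}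
    (h1 : ∀ j, 0 ≤ lam j) (h2 : ∀ j, 0 ≤ mu j)
    (hsum : ∑ j, lam j = ∑ j, mu j)
    (hpt : ∀ i, ∑ j, lam j * W v j i = ∑ j, mu j * W v j i) : lam = mu := by
  have hc0 : (0:ℝ) ≤ ∑ j, lam j := Finset.sum_nonneg fun j _ => h1 j
  rcases eq_or_lt_of_le hc0 with h0 | h0
  · have hl : ∀ j ∈ Finset.univ, lam j = 0 :=
      (Finset.sum_eq_zero_iff_of_nonneg (fun j _ => h1 j)).mp h0.symm
    have hm : ∀ j ∈ Finset.univ, mu j = 0 :=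
      (Finset.sum_eq_zero_iff_of_nonneg (fun j _ => h2 j)).mp (hsum ▸ h0.symm)
    funext j
    rw [hl j (Finset.mem_univ j), hm j (Finset.mem_univ j)]
  · have hcne : (∑ j, lam j) ≠ 0 := ne_of_gt h0
    have hs1 : ∑ j, (∑ k, lam k)⁻¹ * lam j = 1 := by
      rw [← Finset.mul_sum]; exact inv_mul_cancel₀ hcne
    have hs2 : ∑ j, (∑ k, lam k)⁻¹ * mu j = 1 := by
      rw [← Finset.mul_sum, ← hsum]; exact inv_mul_cancel₀ hcne
    have key := (affineIndependent_iff_eq_of_fintype_affineCombination_eq ℝ (W v)).mp hv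
      (fun j => (∑ k, lam k)⁻¹ * lam j) (fun j => (∑ k, lam k)⁻¹ * mu j) hs1 hs2 ?_
    · funext j
      have hj := congrFun key j
      exact mul_left_cancel₀ (inv_ne_zero hcne) hj
    · rw [affineCombination_eq_linear_combination _ _ _ hs1,
        affineCombination_eq_linear_combination _ _ _ hs2]
      funext i
      simp only [Finset.sum_apply, Pi.smul_apply, smul_eq_mul]
      have hpull : ∀ g : Fin (d+1) → ℝ,
          ∑ j, (∑ k, lam k)⁻¹ * g j * W v j i = (∑ k, lam k)⁻¹ * ∑ j, g j * W v j i := by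
        intro g
        rw [Finset.mul_sum]
        exact Finset.sum_congr rfl fun j _ => by ring
      rw [hpull lam, hpull mu, hpt i]

lemma mem_latticePoints_iff (hv : AffineIndependent ℝ (W v)) {S : Finset (Fin (d + 1))}
    (hS : S.Nonempty) (n : ℕ) (x : Fin d → ℤ) :
    x ∈ latticePoints ((n : ℝ) • convexHull ℝ (W v '' ↑S)) ↔
      ∃ lam : Fin (d + 1) → ℝ, (∀ j, 0 ≤ lam j) ∧ (∀ j, j ∉ S → lam j = 0) ∧
        (∑ j, lam j) = (n : ℝ) ∧ ∀ i, ∑ j, lam j * W v j i = (x i : ℝ) := by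
  have hinj : Set.InjOn (W v) ↑S := (hv.injective).injOn
  constructor
  · rintro ⟨y, hy, hxy⟩
    rw [show W v '' ↑S = ↑(S.image (W v)) by rw [Finset.coe_image],
      Finset.convexHull_eq] at hy
    obtain ⟨ω, hω0, hω1, hωc⟩ := hy
    have hy' : y = ∑ p ∈ S.image (W v), ω p • p := by
      rw [← hωc, Finset.centerMass_eq_of_sum_1 _ _ hω1]
      simp
    refine ⟨fun j => if j ∈ S then n * ω (W v j) else 0, ?_, ?_, ?_, ?_⟩
    · intro j
      by_cases hj : j ∈ S
      · simp only [hj, if_true]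
        exact mul_nonneg (Nat.cast_nonneg n) (hω0 _ (Finset.mem_image_of_mem _ hj))
      · simp [hj]
    · intro j hj; simp [hj]
    · rw [Finset.sum_ite_mem, Finset.univ_inter, ← Finset.mul_sum]
      rw [← Finset.sum_image (fun a ha b hb h => hinj ha hb h)]
      rw [hω1, mul_one]
    · intro i
      have hxy' : (x i : ℝ) = n * y i := by
        have := congrFun hxy i
        simpa using this.symm
      have hyi : y i = ∑ j ∈ S, ω (W v j) * W v j i := by
        rw [hy', Finset.sum_apply]
        simp only [Pi.smul_apply, smul_eq_mul]
        rw [Finset.sum_image (fun a ha b hb h => hinj ha hb h)]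
      rw [hxy', hyi, Finset.mul_sum]
      rw [show (fun j => (if j ∈ S then (n:ℝ) * ω (W v j) else 0) * W v j i) =
        (fun j => if j ∈ S then (n:ℝ) * (ω (W v j) * W v j i) else 0) from
        funext fun j => by by_cases hj : j ∈ S <;> simp [hj] <;> ring]
      rw [Finset.sum_ite_mem, Finset.univ_inter]
  · rintro ⟨lam, h0, hsupp, hsum, hpt⟩
    have hsumS : ∑ j ∈ S, lam j = (n : ℝ) := by
      rw [← hsum]
      exact Finset.sum_subset (Finset.subset_univ S) (fun j _ hj => hsupp j hj)
    have hsumS' : ∀ i, ∑ j ∈ S, lam j * W v j i = (x i : ℝ) := by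
      intro i
      rw [← hpt i]
      exact Finset.sum_subset (Finset.subset_univ S)
        (fun j _ hj => by rw [hsupp j hj, zero_mul])
    by_cases hn : n = 0
    · subst hn
      have hQne : (convexHull ℝ (W v '' ↑S)).Nonempty := by
        obtain ⟨j, hj⟩ := hS
        exact ⟨W v j, subset_convexHull ℝ _ ⟨j, hj, rfl⟩⟩
      simp only [Nat.cast_zero]
      rw [latticePoints, Set.mem_setOf_eq, Set.zero_smul_set hQne]
      have hlam0 : ∀ j, lam j = 0 := by
        intro j
        have := (Finset.sum_eq_zero_iff_of_nonneg (fun j _ => h0 j)).mp (by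
          rw [hsum]; norm_num)
        exact this j (Finset.mem_univ j)
      have : ∀ i, (x i : ℝ) = 0 := by
        intro i
        rw [← hpt i]
        apply Finset.sum_eq_zero
        intro j _
        rw [hlam0 j, zero_mul]
      have : (fun i => (x i : ℝ)) = 0 := funext fun i => this i
      rw [this]
      exact Set.zero_mem_zero
    · have hnpos : (0:ℝ) < n := by exact_mod_cast Nat.pos_of_ne_zero hn
      have hsumpos : 0 < ∑ j ∈ S, lam j := by rw [hsumS]; exact hnpos
      have hy : S.centerMass lam (W v) ∈ convexHull ℝ (W v '' ↑S) :=
        Finset.centerMass_mem_convexHull S (fun j _ => h0 j) hsumpos (fun j hj => ⟨j, hj, rfl⟩)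
      refine Set.mem_smul_set.mpr ⟨S.centerMass lam (W v), hy, ?_⟩
      rw [Finset.centerMass, hsumS, smul_inv_smul₀ (ne_of_gt hnpos)]
      funext i
      rw [Finset.sum_apply]
      simp only [Pi.smul_apply, smul_eq_mul]
      exact hsumS' i



lemma box_subset_univ (S : Finset (Fin (d + 1))) : box v S ⊆ box v Finset.univ := by
  rintro r ⟨h1, _, h3, h4⟩
  exact ⟨h1, fun j hj => absurd (Finset.mem_univ j) hj, h3, h4⟩

lemma box_finite (hv : AffineIndependent ℝ (W v)) (S : Finset (Fin (d + 1))) :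
    (box v S).Finite := by
  classical
  set Φ : (Fin (d + 1) → ℝ) → ((Fin d → ℤ) × ℤ) :=
    fun r => (fun i => ⌊∑ j, r j * W v j i⌋, ⌊∑ j, r j⌋) with hΦ
  have hinj : Set.InjOn Φ (box v S) := by
    intro r hr r' hr' h
    have h1 : ∀ i, ∑ j, r j * W v j i = ∑ j, r' j * W v j i := by
      intro i
      obtain ⟨z, hz⟩ := hr.2.2.2 i
      obtain ⟨z', hz'⟩ := hr'.2.2.2 i
      have := congrFun (congrArg Prod.fst h) i
      simp only [hΦ] at this
      rw [hz, hz', Int.floor_intCast, Int.floor_intCast] at this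
      rw [hz, hz', this]
    have h2 : ∑ j, r j = ∑ j, r' j := by
      obtain ⟨m, hm⟩ := hr.2.2.1
      obtain ⟨m', hm'⟩ := hr'.2.2.1
      have := congrArg Prod.snd h
      simp only [hΦ] at this
      rw [hm, hm', Int.floor_intCast, Int.floor_intCast] at this
      rw [hm, hm', this]
    exact weights_unique v hv (fun j => (hr.1 j).1) (fun j => (hr'.1 j).1) h2 h1
  apply Set.Finite.of_finite_image _ hinj
  have hbound : Φ '' box v S ⊆
      (Set.Icc (fun i => -∑ j, |v j i|) (fun i => ∑ j, |v j i|)) ×ˢ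
        (Set.Icc (0 : ℤ) (d + 1)) := by
    rintro p ⟨r, hr, rfl⟩
    have habs : ∀ i, |∑ j, r j * W v j i| ≤ (∑ j, |v j i| : ℤ) := by
      intro i
      calc |∑ j, r j * W v j i| ≤ ∑ j, |r j * W v j i| := Finset.abs_sum_le_sum_abs _ _
        _ ≤ ∑ j, |W v j i| := by
            apply Finset.sum_le_sum
            intro j _
            rw [abs_mul]
            have := (hr.1 j)
            nlinarith [abs_nonneg (W v j i), abs_nonneg (r j), abs_of_nonneg this.1]
        _ = ((∑ j, |v j i| : ℤ) : ℝ) := by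
            push_cast
            rfl
    constructor
    · simp only [Set.mem_Icc, Pi.le_def]
      constructor
      · intro i
        have := (abs_le.mp (habs i)).1
        have hfl : ((-∑ j, |v j i| : ℤ) : ℝ) ≤ ∑ j, r j * W v j i := by push_cast at this ⊢; linarith
        calc (-∑ j, |v j i| : ℤ) = ⌊((-∑ j, |v j i| : ℤ) : ℝ)⌋ := (Int.floor_intCast _).symm
          _ ≤ ⌊∑ j, r j * W v j i⌋ := Int.floor_le_floor hfl
      · intro i
        have := (abs_le.mp (habs i)).2
        calc ⌊∑ j, r j * W v j i⌋ ≤ ⌊((∑ j, |v j i| : ℤ) : ℝ)⌋ := Int.floor_le_floor this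
          _ = _ := Int.floor_intCast _
    · simp only [Set.mem_Icc]
      constructor
      · exact Int.floor_nonneg.mpr (Finset.sum_nonneg fun j _ => (hr.1 j).1)
      · have hlt : ∑ j, r j ≤ ((d + 1 : ℤ) : ℝ) := by
          push_cast
          calc ∑ j, r j ≤ ∑ _j : Fin (d+1), (1:ℝ) :=
                Finset.sum_le_sum fun j _ => le_of_lt (hr.1 j).2
            _ = (d + 1 : ℝ) := by simp
        calc ⌊∑ j, r j⌋ ≤ ⌊((d + 1 : ℤ) : ℝ)⌋ := Int.floor_le_floor hlt
          _ = (d + 1 : ℤ) := Int.floor_intCast _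
  exact Set.Finite.subset (Set.Finite.prod (Set.finite_Icc _ _) (Set.finite_Icc _ _)) hbound

lemma ehrhart_eq (hv : AffineIndependent ℝ (W v)) {S : Finset (Fin (d + 1))}
    (hS : S.Nonempty) (n : ℕ) :
    ehrhart (convexHull ℝ (W v '' ↑S)) n =
      ∑ b ∈ (box_finite v hv S).toFinset,
        if ht b ≤ n then (((n - ht b) + (S.card - 1)).choose (S.card - 1) : ℤ) else 0 := by
  classical
  set T : Finset ((_ : Fin (d + 1) → ℝ) × (Fin (d + 1) → ℕ)) :=
    (box_finite v hv S).toFinset.sigma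
      (fun b => if ht b ≤ n then Finset.piAntidiag S (n - ht b) else ∅) with hT
  set G : ((_ : Fin (d + 1) → ℝ) × (Fin (d + 1) → ℕ)) → (Fin d → ℤ) :=
    fun p => fun i => ⌊∑ j, (p.1 j + (p.2 j : ℝ)) * W v j i⌋ with hG
  have hmem : ∀ p ∈ T, p.1 ∈ box v S ∧ ht p.1 ≤ n ∧
      (∑ j ∈ S, p.2 j = n - ht p.1) ∧ (∀ j, p.2 j ≠ 0 → j ∈ S) := by
    rintro ⟨b, μ⟩ hp
    rw [hT, Finset.mem_sigma] at hp
    obtain ⟨hb, hμ⟩ := hp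
    rw [Set.Finite.mem_toFinset] at hb
    by_cases hle : ht b ≤ n
    · rw [if_pos hle, Finset.mem_piAntidiag] at hμ
      exact ⟨hb, hle, hμ.1, hμ.2⟩
    · rw [if_neg hle] at hμ
      exact absurd hμ (Finset.notMem_empty _)
  have hlam : ∀ p ∈ T, (∀ j, 0 ≤ p.1 j + (p.2 j : ℝ)) ∧
      (∀ j, j ∉ S → p.1 j + (p.2 j : ℝ) = 0) ∧
      ((∑ j, (p.1 j + (p.2 j : ℝ))) = (n : ℝ)) ∧
      ∀ i, ∃ z : ℤ, ∑ j, (p.1 j + (p.2 j : ℝ)) * W v j i = (z : ℝ) ∧ G p i = z := by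
    rintro ⟨b, μ⟩ hp
    obtain ⟨hb, hle, hsμ, hsupμ⟩ := hmem _ hp
    dsimp only at hb hle hsμ hsupμ ⊢
    have hμuniv : ∑ j, (μ j : ℝ) = ((n - ht b : ℕ) : ℝ) := by
      rw [← hsμ]
      rw [← Finset.sum_subset (Finset.subset_univ S)
        (fun j _ hj => by
          have h2 : μ j = 0 := by by_contra h; exact hj (hsupμ j h)
          exact_mod_cast congrArg (Nat.cast : ℕ → ℝ) h2)]
      push_cast
      rfl
    refine ⟨fun j => add_nonneg (hb.1 j).1 (Nat.cast_nonneg _), ?_, ?_, ?_⟩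
    · intro j hj
      have h1 : b j = 0 := hb.2.1 j hj
      have h2 : μ j = 0 := by
        by_contra h
        exact hj (hsupμ j h)
      rw [h1, h2]; simp
    · rw [Finset.sum_add_distrib, hμuniv, ← ht_cast v hb, Nat.cast_sub hle]
      ring
    · intro i
      obtain ⟨z, hz⟩ := hb.2.2.2 i
      have hsplit : ∑ j, (b j + (μ j : ℝ)) * W v j i =
          (∑ j, b j * W v j i) + ∑ j, (μ j : ℝ) * W v j i := by
        rw [← Finset.sum_add_distrib]
        exact Finset.sum_congr rfl fun j _ => by ring
      have heq : ∑ j, (b j + (μ j : ℝ)) * W v j i = ((z + ∑ j, (μ j : ℤ) * v j i : ℤ) : ℝ) := by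
        rw [hsplit, hz]
        push_cast
        simp only [W]
      exact ⟨z + ∑ j, (μ j : ℤ) * v j i, heq, by
        simp only [hG]
        rw [heq, Int.floor_intCast]⟩
  have him : latticePoints ((n : ℝ) • convexHull ℝ (W v '' ↑S)) = G '' ↑T := by
    ext x
    rw [mem_latticePoints_iff v hv hS n x, Set.mem_image]
    constructor
    · rintro ⟨lam, h0, hsupp, hsum, hpt⟩
      set b : Fin (d + 1) → ℝ := fun j => Int.fract (lam j) with hbdef
      set μ : Fin (d + 1) → ℕ := fun j => ⌊lam j⌋₊ with hμdef
      have hμfl : ∀ j, ((μ j : ℝ)) = (⌊lam j⌋ : ℝ) := by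
        intro j
        have h1 : (μ j : ℤ) = ⌊lam j⌋ := by
          rw [hμdef]
          simp only
          rw [← Int.floor_toNat, Int.toNat_of_nonneg (Int.floor_nonneg.2 (h0 j))]
        exact_mod_cast congrArg (Int.cast : ℤ → ℝ) h1
      have hbfract : ∀ j, b j = lam j - (⌊lam j⌋ : ℝ) := fun j => (Int.self_sub_floor (lam j)).symm
      have hdecomp : ∀ j, lam j = b j + μ j := by
        intro j
        rw [hbfract j, hμfl j]
        ring
      have hbmem : b ∈ box v S := by
        refine ⟨fun j => ⟨Int.fract_nonneg _, Int.fract_lt_one _⟩, ?_, ?_, ?_⟩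
        · intro j hj
          rw [hbdef]
          simp only
          rw [hsupp j hj, Int.fract_zero]
        · refine ⟨(n : ℤ) - ∑ j, ⌊lam j⌋, ?_⟩
          have : ∑ j, b j = ∑ j, lam j - ∑ j, (⌊lam j⌋ : ℝ) := by
            rw [← Finset.sum_sub_distrib]
            apply Finset.sum_congr rfl
            intro j _
            exact hbfract j
          rw [this, hsum]
          push_cast
          ring
        · intro i
          obtain ⟨zi⟩ : Nonempty ℤ := ⟨0⟩
          refine ⟨x i - ∑ j, ⌊lam j⌋ * v j i, ?_⟩
          have : ∑ j, b j * W v j i = ∑ j, lam j * W v j i - ∑ j, (⌊lam j⌋ : ℝ) * W v j i := by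
            rw [← Finset.sum_sub_distrib]
            apply Finset.sum_congr rfl
            intro j _
            rw [hbfract j]
            ring
          rw [this, hpt i]
          push_cast
          simp only [W]
      have hhtb : ht b ≤ n := by
        have h1 : (ht b : ℝ) ≤ (n : ℝ) := by
          rw [ht_cast v hbmem, ← hsum]
          apply Finset.sum_le_sum
          intro j _
          rw [hdecomp j]
          have := Nat.cast_nonneg (α := ℝ) (μ j)
          linarith
        exact_mod_cast h1
      have hμmem : μ ∈ Finset.piAntidiag S (n - ht b) := by
        rw [Finset.mem_piAntidiag]
        constructor
        · have hsupμ : ∀ j, μ j ≠ 0 → j ∈ S := by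
            intro j hμj
            by_contra hj
            apply hμj
            rw [hμdef]
            simp only
            rw [hsupp j hj]
            simp
          have h2 : ((∑ j ∈ S, μ j : ℕ) : ℝ) = ((n - ht b : ℕ) : ℝ) := by
            push_cast
            have : ∑ j ∈ S, (μ j : ℝ) = ∑ j, (μ j : ℝ) :=
              Finset.sum_subset (Finset.subset_univ S)
                (fun j _ hj => by
                  have : μ j = 0 := by by_contra h; exact hj (hsupμ j h)
                  rw [this]; simp)
            rw [this]
            have h3 : ∑ j, (μ j : ℝ) = ∑ j, lam j - ∑ j, b j := by
              rw [← Finset.sum_sub_distrib]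
              apply Finset.sum_congr rfl
              intro j _
              rw [hμfl j, hbfract j]; ring
            rw [h3, hsum, ← ht_cast v hbmem, Nat.cast_sub hhtb]
          have := Nat.cast_injective (R := ℝ) h2
          exact this
        · intro j hμj
          by_contra hj
          apply hμj
          rw [hμdef]
          simp only
          rw [hsupp j hj]
          simp
      refine ⟨⟨b, μ⟩, ?_, ?_⟩
      · rw [hT]
        exact Finset.mem_sigma.mpr
          ⟨(Set.Finite.mem_toFinset _).mpr hbmem, by rw [if_pos hhtb]; exact hμmem⟩
      · funext i
        simp only [hG]
        have : ∑ j, (b j + (μ j : ℝ)) * W v j i = (x i : ℝ) := by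
          rw [← hpt i]
          apply Finset.sum_congr rfl
          intro j _
          rw [← hdecomp j]
        rw [this, Int.floor_intCast]
    · rintro ⟨p, hp, rfl⟩
      obtain ⟨hl0, hlsupp, hlsum, hlz⟩ := hlam p hp
      refine ⟨fun j => p.1 j + (p.2 j : ℝ), hl0, hlsupp, hlsum, ?_⟩
      intro i
      obtain ⟨z, hz1, hz2⟩ := hlz i
      rw [hz1, hz2]
  have hinjG : Set.InjOn G ↑T := by
    rintro ⟨b, μ⟩ hp ⟨b', μ'⟩ hq h
    rw [Finset.mem_coe] at hp hq
    obtain ⟨h10, h1supp, h1sum, h1z⟩ := hlam _ hp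
    obtain ⟨h20, h2supp, h2sum, h2z⟩ := hlam _ hq
    have hlameq : (fun j => b j + (μ j : ℝ)) = (fun j => b' j + (μ' j : ℝ)) := by
      apply weights_unique v hv h10 h20 (by rw [h1sum, h2sum])
      intro i
      obtain ⟨z, hz1, hz2⟩ := h1z i
      obtain ⟨z', hz1', hz2'⟩ := h2z i
      rw [hz1, hz1']
      have : z = z' := by rw [← hz2, ← hz2', h]
      rw [this]
    have hb : b = b' := by
      funext j
      have hj := congrFun hlameq j
      have hbm := (hmem _ hp).1
      have hbm' := (hmem _ hq).1
      calc b j = Int.fract (b j + (μ j : ℝ)) := by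
            rw [Int.fract_add_natCast, Int.fract_eq_self.mpr ⟨(hbm.1 j).1, (hbm.1 j).2⟩]
        _ = Int.fract (b' j + (μ' j : ℝ)) := by rw [hj]
        _ = b' j := by
            rw [Int.fract_add_natCast, Int.fract_eq_self.mpr ⟨(hbm'.1 j).1, (hbm'.1 j).2⟩]
    have hμ : μ = μ' := by
      funext j
      have hj := congrFun hlameq j
      rw [hb] at hj
      have : ((μ j : ℝ)) = ((μ' j : ℝ)) := by linarith
      exact_mod_cast this
    subst hb
    subst hμ
    rfl
  rw [ehrhart, him, Set.ncard_image_of_injOn hinjG, Set.ncard_coe_finset]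
  rw [hT, Finset.card_sigma]
  push_cast
  apply Finset.sum_congr rfl
  intro b _
  by_cases hle : ht b ≤ n
  · rw [if_pos hle, if_pos hle, card_piAntidiag S hS]
  · rw [if_neg hle, if_neg hle]
    simp

lemma key_ident' (s h i : ℕ) :
    ∑ j ∈ Finset.range (i + 1),
      (-1 : ℤ) ^ (i - j) * ((s + 1).choose (i - j) : ℤ) *
        (if h ≤ j then (((j - h) + s).choose s : ℤ) else 0) =
      if h = i then 1 else 0 := by
  rcases lt_or_ge i h with hih | hih
  · rw [if_neg (by omega)]
    apply Finset.sum_eq_zero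
    intro j hj
    rw [Finset.mem_range] at hj
    rw [if_neg (by omega)]
    ring
  · rw [Finset.range_eq_Ico, ← Finset.sum_Ico_consecutive _ (Nat.zero_le h) (by omega : h ≤ i + 1)]
    have h1 : ∑ j ∈ Finset.Ico 0 h,
        (-1 : ℤ) ^ (i - j) * ((s + 1).choose (i - j) : ℤ) *
          (if h ≤ j then (((j - h) + s).choose s : ℤ) else 0) = 0 := by
      apply Finset.sum_eq_zero
      intro j hj
      rw [Finset.mem_Ico] at hj
      rw [if_neg (by omega)]
      ring
    have h2 : ∑ j ∈ Finset.Ico h (i + 1),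
        (-1 : ℤ) ^ (i - j) * ((s + 1).choose (i - j) : ℤ) *
          (if h ≤ j then (((j - h) + s).choose s : ℤ) else 0) = if h = i then 1 else 0 := by
      rw [Finset.sum_Ico_eq_sum_range]
      rw [show i + 1 - h = (i - h) + 1 by omega]
      have hk := key_ident s (i - h)
      have hiff : (if i - h = 0 then (1:ℤ) else 0) = if h = i then 1 else 0 := by
        by_cases hc : h = i
        · simp [hc]
        · rw [if_neg hc, if_neg (by omega)]
      rw [hiff] at hk
      rw [← hk]
      apply Finset.sum_congr rfl
      intro a ha
      rw [Finset.mem_range] at ha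
      rw [if_pos (by omega)]
      rw [show i - (h + a) = (i - h) - a by omega, show h + a - h = a by omega]
    rw [h1, h2, zero_add]

lemma delta_eq (hv : AffineIndependent ℝ (W v)) {S : Finset (Fin (d + 1))}
    (hS : S.Nonempty) (i : ℕ) :
    deltaVec (convexHull ℝ (W v '' ↑S)) (S.card - 1) i =
      (((box_finite v hv S).toFinset.filter (fun b => ht b = i)).card : ℤ) := by
  classical
  rw [deltaVec]
  calc ∑ j ∈ Finset.range (i + 1),
        (-1 : ℤ) ^ (i - j) * ((S.card - 1 + 1).choose (i - j) : ℤ) *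
          ehrhart (convexHull ℝ (W v '' ↑S)) j
      = ∑ j ∈ Finset.range (i + 1), ∑ b ∈ (box_finite v hv S).toFinset,
          (-1 : ℤ) ^ (i - j) * ((S.card - 1 + 1).choose (i - j) : ℤ) *
            (if ht b ≤ j then (((j - ht b) + (S.card - 1)).choose (S.card - 1) : ℤ) else 0) := by
        apply Finset.sum_congr rfl
        intro j _
        rw [ehrhart_eq v hv hS j, Finset.mul_sum]
    _ = ∑ b ∈ (box_finite v hv S).toFinset, ∑ j ∈ Finset.range (i + 1),
          (-1 : ℤ) ^ (i - j) * ((S.card - 1 + 1).choose (i - j) : ℤ) *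
            (if ht b ≤ j then (((j - ht b) + (S.card - 1)).choose (S.card - 1) : ℤ) else 0) :=
        Finset.sum_comm
    _ = ∑ b ∈ (box_finite v hv S).toFinset, (if ht b = i then (1:ℤ) else 0) := by
        apply Finset.sum_congr rfl
        intro b _
        exact key_ident' (S.card - 1) (ht b) i
    _ = _ := by rw [Finset.sum_boole]

lemma ht_lt_card (hv : AffineIndependent ℝ (W v)) {S : Finset (Fin (d + 1))} (hS : S.Nonempty)
    {b : Fin (d + 1) → ℝ} (hb : b ∈ box v S) : ht b < S.card := by
  have h1 : (ht b : ℝ) < (S.card : ℝ) := by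
    rw [ht_cast v hb]
    have h2 : ∑ j, b j = ∑ j ∈ S, b j :=
      (Finset.sum_subset (Finset.subset_univ S) (fun j _ hj => hb.2.1 j hj)).symm
    rw [h2]
    calc ∑ j ∈ S, b j < ∑ _j ∈ S, (1:ℝ) :=
          Finset.sum_lt_sum_of_nonempty hS (fun j _ => (hb.1 j).2)
      _ = (S.card : ℝ) := by simp
  exact_mod_cast h1

lemma sum_delta_eq_card (hv : AffineIndependent ℝ (W v)) {S : Finset (Fin (d + 1))}
    (hS : S.Nonempty) :
    ∑ i ∈ Finset.range S.card, deltaVec (convexHull ℝ (W v '' ↑S)) (S.card - 1) i =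
      ((box_finite v hv S).toFinset.card : ℤ) := by
  classical
  have : ∀ i ∈ Finset.range S.card, deltaVec (convexHull ℝ (W v '' ↑S)) (S.card - 1) i =
      (((box_finite v hv S).toFinset.filter (fun b => ht b = i)).card : ℤ) :=
    fun i _ => delta_eq v hv hS i
  rw [Finset.sum_congr rfl this]
  rw [← Nat.cast_sum]
  congr 1
  symm
  apply Finset.card_eq_sum_card_fiberwise
  intro b hb
  rw [Finset.mem_coe, Set.Finite.mem_toFinset] at hb
  rw [Finset.mem_coe, Finset.mem_range]
  exact ht_lt_card v hv hS hb

def iota (r : Fin (d + 1) → ℝ) : Fin (d + 1) → ℝ := fun j => if r j = 0 then 0 else 1 - r j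

lemma iota_bounds {r : Fin (d + 1) → ℝ} (hr : ∀ j, 0 ≤ r j ∧ r j < 1) :
    ∀ j, 0 ≤ iota r j ∧ iota r j < 1 := by
  intro j
  rw [iota]
  by_cases h : r j = 0
  · simp [h]
  · rw [if_neg h]
    have h1 := (hr j).1
    have h2 := (hr j).2
    constructor <;> [linarith; (have : 0 < r j := lt_of_le_of_ne h1 (Ne.symm h); linarith)]

lemma iota_eq_zero_iff {r : Fin (d + 1) → ℝ} (hr : ∀ j, 0 ≤ r j ∧ r j < 1) (j : Fin (d + 1)) :
    iota r j = 0 ↔ r j = 0 := by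
  rw [iota]
  by_cases h : r j = 0
  · simp [h]
  · rw [if_neg h]
    constructor
    · intro h1
      have := (hr j).2
      linarith
    · intro h1; exact absurd h1 h

lemma iota_iota {r : Fin (d + 1) → ℝ} (hr : ∀ j, 0 ≤ r j ∧ r j < 1) : iota (iota r) = r := by
  funext j
  by_cases h : r j = 0
  · rw [iota, if_pos ((iota_eq_zero_iff hr j).mpr h), h]
  · rw [iota, if_neg (fun hc => h ((iota_eq_zero_iff hr j).mp hc))]
    rw [iota, if_neg h]
    ring

lemma iota_zero_eq {r : Fin (d + 1) → ℝ} (hr : ∀ j, 0 ≤ r j ∧ r j < 1)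
    (h : iota r = 0) : r = 0 := by
  funext j
  have := congrFun h j
  rw [show (0 : Fin (d+1) → ℝ) j = 0 from rfl] at this
  exact (iota_eq_zero_iff hr j).mp this

open scoped Classical in
lemma sum_iota_add {r : Fin (d + 1) → ℝ} :
    ∑ j, (iota r j + r j) = ((Finset.univ.filter (fun j => r j ≠ 0)).card : ℝ) := by
  rw [← Finset.sum_boole]
  apply Finset.sum_congr rfl
  intro j _
  rw [iota]
  by_cases h : r j = 0
  · simp [h]
  · rw [if_neg h, if_pos h]
    ring

open scoped Classical in
lemma iota_mem_box {b : Fin (d + 1) → ℝ} (hb : b ∈ box v Finset.univ) :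
    iota b ∈ box v Finset.univ := by
  obtain ⟨h1, h2, ⟨m, hm⟩, h4⟩ := hb
  refine ⟨iota_bounds h1, fun j hj => absurd (Finset.mem_univ j) hj, ?_, ?_⟩
  · refine ⟨((Finset.univ.filter (fun j => b j ≠ 0)).card : ℤ) - m, ?_⟩
    have hsum := sum_iota_add (r := b)
    rw [Finset.sum_add_distrib, hm] at hsum
    push_cast
    linarith
  · intro i
    obtain ⟨z, hz⟩ := h4 i
    refine ⟨(∑ j ∈ Finset.univ.filter (fun j => b j ≠ 0), v j i) - z, ?_⟩
    have hsplit : ∑ j, iota b j * W v j i =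
        (∑ j, (if b j ≠ 0 then (1:ℝ) else 0) * W v j i) - ∑ j, b j * W v j i := by
      rw [← Finset.sum_sub_distrib]
      apply Finset.sum_congr rfl
      intro j _
      rw [iota]
      by_cases h : b j = 0
      · simp [h]
      · rw [if_neg h, if_pos h]
        ring
    rw [hsplit, hz]
    have : ∑ j, (if b j ≠ 0 then (1:ℝ) else 0) * W v j i =
        ∑ j ∈ Finset.univ.filter (fun j => b j ≠ 0), W v j i := by
      rw [Finset.sum_filter]
      apply Finset.sum_congr rfl
      intro j _
      by_cases h : b j = 0 <;> simp [h]
    rw [this]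
    push_cast
    simp only [W]

open scoped Classical in
lemma ht_iota_add {b : Fin (d + 1) → ℝ} (hb : b ∈ box v Finset.univ) :
    ht (iota b) + ht b = (Finset.univ.filter (fun j => b j ≠ 0)).card := by
  have h1 : ((ht (iota b) + ht b : ℕ) : ℝ) =
      (((Finset.univ.filter (fun j => b j ≠ 0)).card : ℕ) : ℝ) := by
    push_cast
    rw [ht_cast v (iota_mem_box v hb), ht_cast v hb, ← Finset.sum_add_distrib]
    exact_mod_cast sum_iota_add (r := b)
  exact_mod_cast h1

lemma box_erase_iff (k : Fin (d + 1)) (b : Fin (d + 1) → ℝ) :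
    b ∈ box v (Finset.univ.erase k) ↔ b ∈ box v Finset.univ ∧ b k = 0 := by
  constructor
  · intro hb
    exact ⟨box_subset_univ v _ hb, hb.2.1 k (fun hc => (Finset.mem_erase.mp hc).1 rfl)⟩
  · rintro ⟨⟨h1, h2, h3, h4⟩, hk⟩
    refine ⟨h1, fun j hj => ?_, h3, h4⟩
    have : j = k := by
      by_contra hc
      exact hj (Finset.mem_erase.mpr ⟨hc, Finset.mem_univ j⟩)
    rw [this, hk]

open scoped Classical in
lemma supp_card_le {b : Fin (d + 1) → ℝ} {k : Fin (d + 1)} (hbk : b k = 0) :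
    (Finset.univ.filter (fun j => b j ≠ 0)).card ≤ d := by
  have hsub : Finset.univ.filter (fun j => b j ≠ 0) ⊆ Finset.univ.erase k := by
    intro j hj
    rw [Finset.mem_filter] at hj
    exact Finset.mem_erase.mpr ⟨fun h => hj.2 (h ▸ hbk), Finset.mem_univ j⟩
  calc (Finset.univ.filter (fun j => b j ≠ 0)).card ≤ (Finset.univ.erase k).card :=
        Finset.card_le_card hsub
    _ = d := by
        rw [Finset.card_erase_of_mem (Finset.mem_univ k), Finset.card_univ, Fintype.card_fin]
        omega

open scoped Classical in
lemma ht_iota_add_univ (hv : AffineIndependent ℝ (W v)) {b : Fin (d + 1) → ℝ}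
    (hb : b ∈ box v Finset.univ) (hfull : ∀ j, b j ≠ 0) :
    ht (iota b) + ht b = d + 1 := by
  rw [ht_iota_add v hb]
  rw [Finset.filter_true_of_mem (fun j _ => hfull j), Finset.card_univ, Fintype.card_fin]

open scoped Classical in
lemma Ff_card_eq (hv : AffineIndependent ℝ (W v)) (hd : 1 ≤ d) {i : ℕ} (hi : i ≤ (d - 1) / 2) :
    (((box_finite v hv Finset.univ).toFinset.filter (fun b => ht b = i + 1)).filter
        (fun b => ∀ j, b j ≠ 0)).card =
    (((box_finite v hv Finset.univ).toFinset.filter (fun b => ht b = d - i)).filter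
        (fun b => ∀ j, b j ≠ 0)).card := by
  have hid : i < d := by omega
  apply Finset.card_bij' (fun b _ => iota b) (fun b _ => iota b)
  · intro b hb
    rw [Finset.mem_filter, Finset.mem_filter, Set.Finite.mem_toFinset] at hb
    obtain ⟨⟨hbB, hbh⟩, hbf⟩ := hb
    rw [Finset.mem_filter, Finset.mem_filter, Set.Finite.mem_toFinset]
    have hmem := iota_mem_box v hbB
    refine ⟨⟨hmem, ?_⟩, fun j hc => hbf j ((iota_eq_zero_iff hbB.1 j).mp hc)⟩
    have := ht_iota_add_univ v hv hbB hbf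
    omega
  · intro b hb
    rw [Finset.mem_filter, Finset.mem_filter, Set.Finite.mem_toFinset] at hb
    obtain ⟨⟨hbB, hbh⟩, hbf⟩ := hb
    rw [Finset.mem_filter, Finset.mem_filter, Set.Finite.mem_toFinset]
    have hmem := iota_mem_box v hbB
    refine ⟨⟨hmem, ?_⟩, fun j hc => hbf j ((iota_eq_zero_iff hbB.1 j).mp hc)⟩
    have := ht_iota_add_univ v hv hbB hbf
    omega
  · intro b hb
    rw [Finset.mem_filter, Finset.mem_filter, Set.Finite.mem_toFinset] at hb
    exact iota_iota hb.1.1.1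
  · intro b hb
    rw [Finset.mem_filter, Finset.mem_filter, Set.Finite.mem_toFinset] at hb
    exact iota_iota hb.1.1.1

open scoped Classical in
lemma card_split (hv : AffineIndependent ℝ (W v)) (j : ℕ) :
    ((box_finite v hv Finset.univ).toFinset.filter (fun b => ht b = j)).card =
      (((box_finite v hv Finset.univ).toFinset.filter (fun b => ht b = j)).filter
          (fun b => ∀ j', b j' ≠ 0)).card +
      (((box_finite v hv Finset.univ).toFinset.filter (fun b => ht b = j)).filter
          (fun b => ¬ ∀ j', b j' ≠ 0)).card :=
  (Finset.card_filter_add_card_filter_not _).symm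

open scoped Classical in
lemma master (hv : AffineIndependent ℝ (W v)) (hd : 1 ≤ d) :
    (∀ i ≤ (d - 1) / 2,
        ((box_finite v hv Finset.univ).toFinset.filter (fun b => ht b = d - i)).card =
        ((box_finite v hv Finset.univ).toFinset.filter (fun b => ht b = i + 1)).card) ↔
      ∀ k : Fin (d + 1), ∀ b ∈ box v (Finset.univ.erase k), b = 0 := by
  set B := (box_finite v hv Finset.univ).toFinset with hB
  constructor
  · intro hsym k b0' hb0'
    by_contra hne
    set NZ := B.filter (fun b => (¬ ∀ j, b j ≠ 0) ∧ b ≠ 0) with hNZ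
    have hNZmem : ∀ b, b ∈ NZ ↔ b ∈ box v Finset.univ ∧ (¬ ∀ j, b j ≠ 0) ∧ b ≠ 0 := by
      intro b
      rw [hNZ, Finset.mem_filter, hB, Set.Finite.mem_toFinset]
    have hb0'univ := (box_erase_iff v k b0').mp hb0'
    have hb0'NZ : b0' ∈ NZ := by
      rw [hNZmem]
      exact ⟨hb0'univ.1, fun hc => hc k hb0'univ.2, hne⟩
    have hNZne : NZ.Nonempty := ⟨b0', hb0'NZ⟩
    obtain ⟨b0, hb0, hmin⟩ := Finset.exists_min_image NZ ht hNZne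
    have hiotaNZ : ∀ b ∈ NZ, iota b ∈ NZ := by
      intro b hb
      rw [hNZmem] at hb ⊢
      obtain ⟨hbu, hbnf, hbne⟩ := hb
      refine ⟨iota_mem_box v hbu, ?_, fun hc => hbne (iota_zero_eq hbu.1 hc)⟩
      intro hc
      push_neg at hbnf
      obtain ⟨j, hj⟩ := hbnf
      exact hc j ((iota_eq_zero_iff hbu.1 j).mpr hj)
    have hhtpos : ∀ b ∈ NZ, 1 ≤ ht b := by
      intro b hb
      rw [hNZmem] at hb
      rcases Nat.eq_zero_or_pos (ht b) with h | h
      · exact absurd (eq_zero_of_ht_eq_zero v hb.1 h) hb.2.2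
      · exact h
    have hsum_le : ∀ b ∈ NZ, ht (iota b) + ht b ≤ d := by
      intro b hb
      rw [hNZmem] at hb
      obtain ⟨hbu, hbnf, hbne⟩ := hb
      push_neg at hbnf
      obtain ⟨k', hk'⟩ := hbnf
      rw [ht_iota_add v hbu]
      exact supp_card_le hk'
    set m := ht b0 with hm
    have hm1 : 1 ≤ m := hhtpos b0 hb0
    have h2m : 2 * m ≤ d := by
      have h1 := hsum_le b0 hb0
      have h2 := hmin (iota b0) (hiotaNZ b0 hb0)
      omega
    have hi : m - 1 ≤ (d - 1) / 2 := by omega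
    have hmm : (m - 1) + 1 = m := by omega
    have hδ := hsym (m - 1) hi
    have hFf := Ff_card_eq v hv hd hi
    have hsplit1 := card_split v hv (d - (m - 1))
    have hsplit2 := card_split v hv ((m - 1) + 1)
    simp only [hmm] at hδ hFf hsplit2
    have hPdcard : ((B.filter (fun b => ht b = d - (m - 1))).filter
        (fun b => ¬ ∀ j', b j' ≠ 0)).card = ((B.filter (fun b => ht b = m)).filter
        (fun b => ¬ ∀ j', b j' ≠ 0)).card := by
      rw [hsplit1, hsplit2, hFf] at hδ
      exact Nat.add_left_cancel hδ
    have hb0Pd : b0 ∈ (B.filter (fun b => ht b = m)).filter (fun b => ¬ ∀ j', b j' ≠ 0) := by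
      rw [Finset.mem_filter, Finset.mem_filter]
      rw [hNZmem] at hb0
      exact ⟨⟨by rw [hB, Set.Finite.mem_toFinset]; exact hb0.1, rfl⟩, hb0.2.1⟩
    have hne1 : ((B.filter (fun b => ht b = d - (m - 1))).filter
        (fun b => ¬ ∀ j', b j' ≠ 0)).Nonempty := by
      rw [← Finset.card_pos, hPdcard, Finset.card_pos]
      exact ⟨b0, hb0Pd⟩
    obtain ⟨b1, hb1⟩ := hne1
    rw [Finset.mem_filter, Finset.mem_filter] at hb1
    obtain ⟨⟨hb1B, hb1h⟩, hb1nf⟩ := hb1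
    clear hδ hsplit1 hsplit2 hFf hPdcard hb0Pd
    have hb1u : b1 ∈ box v Finset.univ := by rwa [hB, Set.Finite.mem_toFinset] at hb1B
    have hb1ne : b1 ≠ 0 := by
      intro hc
      rw [hc] at hb1h
      rw [ht_zero] at hb1h
      omega
    have hb1NZ : b1 ∈ NZ := by
      rw [hNZmem]
      exact ⟨hb1u, hb1nf, hb1ne⟩
    have h1 := hsum_le b1 hb1NZ
    have h2 := hmin (iota b1) (hiotaNZ b1 hb1NZ)
    omega
  · intro hz i hi
    have hPdempty : ∀ j, 1 ≤ j → (B.filter (fun b => ht b = j)).filter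
        (fun b => ¬ ∀ j', b j' ≠ 0) = ∅ := by
      intro j hj
      rw [Finset.eq_empty_iff_forall_notMem]
      intro b hb
      rw [Finset.mem_filter, Finset.mem_filter, hB, Set.Finite.mem_toFinset] at hb
      obtain ⟨⟨hbu, hbh⟩, hbnf⟩ := hb
      push_neg at hbnf
      obtain ⟨k, hk⟩ := hbnf
      have : b = 0 := hz k b ((box_erase_iff v k b).mpr ⟨hbu, hk⟩)
      rw [this, ht_zero] at hbh
      omega
    have he1 := hPdempty (d - i) (by omega)
    have he2 := hPdempty (i + 1) (by omega)
    have h1 := card_split v hv (d - i)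
    have h2 := card_split v hv (i + 1)
    rw [he1, Finset.card_empty] at h1
    rw [he2, Finset.card_empty] at h2
    rw [h1, h2, Ff_card_eq v hv hd hi]

end Stmt8

theorem stmt8 (d : ℕ) (hd : 1 ≤ d) (v : Fin (d + 1) → Fin d → ℤ)
    (hv : AffineIndependent ℝ (fun j => fun i => ((v j i : ℤ) : ℝ)))
    (P : Set (Fin d → ℝ))
    (hP : P = convexHull ℝ (Set.range fun j => fun i => ((v j i : ℤ) : ℝ))) :
    (∀ i ≤ (d - 1) / 2, deltaVec P d (d - i) = deltaVec P d (i + 1)) ↔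
      ∀ k : Fin (d + 1),
        ∑ i ∈ Finset.range d,
          deltaVec (convexHull ℝ ((fun j => fun i => ((v j i : ℤ) : ℝ)) '' {j | j ≠ k}))
            (d - 1) i = 1 := by
  classical
  have hv' : AffineIndependent ℝ (Stmt8.W v) := hv
  have huniv : (Finset.univ : Finset (Fin (d + 1))).Nonempty := Finset.univ_nonempty
  have hucard : (Finset.univ : Finset (Fin (d + 1))).card = d + 1 := by simp
  have hfun : (fun j => fun i => ((v j i : ℤ) : ℝ)) = Stmt8.W v := rfl
  have hPconv : P = convexHull ℝ (Stmt8.W v '' ↑(Finset.univ : Finset (Fin (d + 1)))) := by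
    rw [hP, Finset.coe_univ, Set.image_univ, hfun]
  have hdelta : ∀ j, deltaVec P d j =
      (((Stmt8.box_finite v hv' Finset.univ).toFinset.filter
        (fun b => Stmt8.ht b = j)).card : ℤ) := by
    intro j
    have h := Stmt8.delta_eq v hv' huniv j
    rw [hucard] at h
    simp only [Nat.add_sub_cancel] at h
    rw [hPconv]
    exact h
  have hface : ∀ k : Fin (d + 1),
      (∑ i ∈ Finset.range d,
        deltaVec (convexHull ℝ ((fun j => fun i => ((v j i : ℤ) : ℝ)) '' {j | j ≠ k}))
          (d - 1) i)
      = ((Stmt8.box_finite v hv' (Finset.univ.erase k)).toFinset.card : ℤ) := by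
    intro k
    have hScard : (Finset.univ.erase k).card = d := by
      rw [Finset.card_erase_of_mem (Finset.mem_univ k), hucard]
      omega
    have hSne : (Finset.univ.erase k).Nonempty := by
      rw [← Finset.card_pos, hScard]
      omega
    have hset : {j | j ≠ k} = (↑(Finset.univ.erase k) : Set (Fin (d + 1))) := by
      ext j
      simp
    have h := Stmt8.sum_delta_eq_card v hv' hSne
    rw [hScard] at h
    rw [hfun, hset]
    exact h
  have h0mem : ∀ k, (0 : Fin (d + 1) → ℝ) ∈ (Stmt8.box_finite v hv' (Finset.univ.erase k)).toFinset :=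
    fun k => (Set.Finite.mem_toFinset _).mpr (Stmt8.zero_mem_box v _)
  constructor
  · intro hL k
    have hsym : ∀ i ≤ (d - 1) / 2,
        ((Stmt8.box_finite v hv' Finset.univ).toFinset.filter
          (fun b => Stmt8.ht b = d - i)).card =
        ((Stmt8.box_finite v hv' Finset.univ).toFinset.filter
          (fun b => Stmt8.ht b = i + 1)).card := by
      intro i hi
      have h := hL i hi
      rw [hdelta (d - i), hdelta (i + 1)] at h
      exact_mod_cast h
    have hz := (Stmt8.master v hv' hd).mp hsym
    rw [hface k]
    have hsingle : (Stmt8.box_finite v hv' (Finset.univ.erase k)).toFinset = {0} := by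
      apply Finset.eq_singleton_iff_unique_mem.mpr
      exact ⟨h0mem k, fun b hb => hz k b ((Set.Finite.mem_toFinset _).mp hb)⟩
    rw [hsingle]
    simp
  · intro hR i hi
    have hz : ∀ k : Fin (d + 1), ∀ b ∈ Stmt8.box v (Finset.univ.erase k), b = 0 := by
      intro k b hb
      have h1 := hR k
      rw [hface k] at h1
      have hcard : (Stmt8.box_finite v hv' (Finset.univ.erase k)).toFinset.card = 1 := by
        exact_mod_cast h1
      obtain ⟨a, ha⟩ := Finset.card_eq_one.mp hcard
      have hb' : b ∈ (Stmt8.box_finite v hv' (Finset.univ.erase k)).toFinset :=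
        (Set.Finite.mem_toFinset _).mpr hb
      rw [ha, Finset.mem_singleton] at hb'
      have h0' := h0mem k
      rw [ha, Finset.mem_singleton] at h0'
      rw [hb', ← h0']
    have hsym := (Stmt8.master v hv' hd).mpr hz i hi
    rw [hdelta (d - i), hdelta (i + 1)]
    exact_mod_cast hsym
end
end

section
/- Let P be an integral d-simplex whose normalized volume is a prime number p. If min{i > 0 : δ_i ≠ 0} = d + 1 − max{i : δ_i ≠ 0}, then the δ-vector of P is shifted symmetric, i.e., δ_{d−i} = δ_{i+1} for all 0 ≤ i ≤ ⌊(d−1)/2⌋. -/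
open scoped BigOperators Pointwise

noncomputable section

namespace Stmt9Aux


lemma sum_choose_aux (k : ℕ) : ∀ m : ℕ, ∑ j ∈ Finset.range (m+1), (j+k).choose k = (m+k+1).choose (k+1) := by
  intro m
  induction m with
  | zero => simp
  | succ m ih =>
      rw [Finset.sum_range_succ, ih]
      have h2 : m + 1 + k = m + k + 1 := by ring
      rw [h2, Nat.choose_succ_succ (m+k+1) k]
      exact Nat.add_comm _ _

lemma card_tuple : ∀ (k m : ℕ), (Finset.Nat.antidiagonalTuple (k+1) m).card = (m+k).choose k := by
  intro k
  induction k with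
  | zero =>
      intro m
      have h : Finset.Nat.antidiagonalTuple 1 m = {fun _ => m} := by
        ext x
        rw [Finset.Nat.mem_antidiagonalTuple, Finset.mem_singleton]
        constructor
        · intro h; funext i
          have : i = 0 := Subsingleton.elim _ _
          subst this
          simpa [Fin.sum_univ_one] using h
        · intro h; subst h; simp [Fin.sum_univ_one]
      rw [h]; simp
  | succ k ih =>
      intro m
      have hmem : ∀ x ∈ Finset.Nat.antidiagonalTuple (k+2) m, x 0 ∈ Finset.range (m+1) := by
        intro x hx
        rw [Finset.Nat.mem_antidiagonalTuple] at hx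
        rw [Finset.mem_range]
        have : x 0 ≤ ∑ i, x i := Finset.single_le_sum (fun i _ => Nat.zero_le _) (Finset.mem_univ 0)
        omega
      rw [Finset.card_eq_sum_card_fiberwise hmem]
      have hfib : ∀ t ∈ Finset.range (m+1),
          ((Finset.Nat.antidiagonalTuple (k+2) m).filter (fun x => x 0 = t)).card
            = (Finset.Nat.antidiagonalTuple (k+1) (m - t)).card := by
        intro t ht
        rw [Finset.mem_range] at ht
        refine Finset.card_bij' (fun x _ => Fin.tail x) (fun g _ => Fin.cons t g) ?_ ?_ ?_ ?_
        · intro x hx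
          rw [Finset.mem_filter, Finset.Nat.mem_antidiagonalTuple] at hx
          rw [Finset.Nat.mem_antidiagonalTuple]
          obtain ⟨hs, h0⟩ := hx
          rw [Fin.sum_univ_succ] at hs
          show ∑ i : Fin (k+1), x i.succ = m - t
          omega
        · intro g hg
          rw [Finset.Nat.mem_antidiagonalTuple] at hg
          rw [Finset.mem_filter, Finset.Nat.mem_antidiagonalTuple]
          constructor
          · rw [Fin.sum_univ_succ]
            simp only [Fin.cons_zero, Fin.cons_succ]
            omega
          · simp
        · intro x hx
          rw [Finset.mem_filter] at hx
          show Fin.cons t (Fin.tail x) = x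
          rw [show t = x 0 from hx.2.symm]
          exact Fin.cons_self_tail x
        · intro g _
          funext i
          show (Fin.cons t g : Fin (k+2) → ℕ) i.succ = g i
          rw [Fin.cons_succ]
      rw [Finset.sum_congr rfl hfib]
      have hcongr : ∀ t ∈ Finset.range (m+1),
          (Finset.Nat.antidiagonalTuple (k+1) (m-t)).card = (m + 1 - 1 - t + k).choose k := by
        intro t ht
        rw [Finset.mem_range] at ht
        rw [ih (m - t), show m - t = m + 1 - 1 - t from by omega]
      rw [Finset.sum_congr rfl hcongr,
        Finset.sum_range_reflect (fun t => (t + k).choose k) (m+1), sum_choose_aux k m,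
        show m + (k+1) = m + k + 1 from by omega]

lemma coeff_one_sub_X_pow (n m : ℕ) :
    PowerSeries.coeff m ((1 - PowerSeries.X) ^ n) = (-1 : ℤ)^m * (n.choose m) := by
  have h : (1 - PowerSeries.X : PowerSeries ℤ) = (-PowerSeries.X) + 1 := by ring
  rw [h, add_pow, map_sum]
  have hterm : ∀ j ∈ Finset.range (n+1),
      PowerSeries.coeff m ((-PowerSeries.X)^j * 1^(n-j) * (n.choose j : PowerSeries ℤ))
        = if m = j then (-1:ℤ)^j * (n.choose j) else 0 := by
    intro j _
    rw [one_pow, mul_one, neg_pow]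
    have hC : ((-1 : PowerSeries ℤ) ^ j * PowerSeries.X ^ j * (n.choose j : PowerSeries ℤ))
        = PowerSeries.C ((-1 : ℤ)^j * (n.choose j)) * PowerSeries.X ^ j := by
      rw [map_mul, map_pow, map_neg, map_one, map_natCast]
      ring
    rw [hC, PowerSeries.coeff_C_mul, PowerSeries.coeff_X_pow]
    split <;> simp
  rw [Finset.sum_congr rfl hterm, Finset.sum_ite_eq (Finset.range (n+1)) m
      (fun j => (-1:ℤ)^j * (n.choose j))]
  split
  · rfl
  · rename_i hm
    rw [Finset.mem_range, not_lt] at hm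
    rw [Nat.choose_eq_zero_of_lt (by omega)]
    simp

lemma key_id (d t : ℕ) :
    (∑ m ∈ Finset.range (t+1), (-1:ℤ)^m * ((d+1).choose m) * ((t - m + d).choose d))
      = if t = 0 then 1 else 0 := by
  have h1 : ((1 - PowerSeries.X)^(d+1) * (PowerSeries.mk fun n => ((d+n).choose d : ℤ))) = 1 := by
    rw [mul_comm]
    exact PowerSeries.mk_add_choose_mul_one_sub_pow_eq_one ℤ d
  have h2 := congrArg (PowerSeries.coeff t) h1
  rw [PowerSeries.coeff_mul, Finset.Nat.sum_antidiagonal_eq_sum_range_succ_mk,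
    PowerSeries.coeff_one] at h2
  rw [← h2]
  apply Finset.sum_congr rfl
  intro m hm
  rw [coeff_one_sub_X_pow, PowerSeries.coeff_mk]
  have h3 : t - m + d = d + (t - m) := by omega
  rw [h3]

lemma key_id' (d k i : ℕ) :
    (∑ j ∈ Finset.range (i+1), (-1:ℤ)^(i-j) * ((d+1).choose (i-j)) *
      (if k ≤ j then (((j - k + d).choose d : ℕ) : ℤ) else 0)) = if k = i then 1 else 0 := by
  rcases le_or_gt k i with hk | hk
  · rw [Finset.range_eq_Ico, ← Finset.sum_Ico_consecutive _ (Nat.zero_le k) (by omega : k ≤ i+1)]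
    have h0 : ∑ j ∈ Finset.Ico 0 k, (-1:ℤ)^(i-j) * ((d+1).choose (i-j)) *
        (if k ≤ j then (((j - k + d).choose d : ℕ) : ℤ) else 0) = 0 := by
      apply Finset.sum_eq_zero
      intro j hj
      rw [Finset.mem_Ico] at hj
      rw [if_neg (by omega)]
      ring
    rw [h0, zero_add, Finset.sum_Ico_eq_sum_range]
    set t := i - k with ht
    have hit : i + 1 - k = t + 1 := by omega
    rw [hit]
    have heq : ∀ u ∈ Finset.range (t + 1),
        (-1:ℤ)^(i-(k+u)) * ((d+1).choose (i-(k+u))) *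
          (if k ≤ k + u then (((k + u - k + d).choose d : ℕ) : ℤ) else 0)
        = (fun m => (-1:ℤ)^m * (((d+1).choose m : ℕ) : ℤ) * (((t - m + d).choose d : ℕ) : ℤ))
            (t + 1 - 1 - u) := by
      intro u hu
      rw [Finset.mem_range] at hu
      rw [if_pos (by omega)]
      have e1 : i - (k + u) = t + 1 - 1 - u := by omega
      have e2 : k + u - k + d = t - (t + 1 - 1 - u) + d := by omega
      rw [e1, e2]
    rw [Finset.sum_congr rfl heq,
      Finset.sum_range_reflect (fun m => (-1:ℤ)^m * (((d+1).choose m : ℕ) : ℤ) * (((t - m + d).choose d : ℕ) : ℤ)) (t+1),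
      key_id d t]
    rcases Nat.eq_or_lt_of_le hk with he | hl
    · rw [if_pos he, if_pos (by omega)]
    · rw [if_neg (by omega), if_neg (by omega)]
  · have h0 : ∀ j ∈ Finset.range (i+1), (-1:ℤ)^(i-j) * ((d+1).choose (i-j)) *
        (if k ≤ j then (((j - k + d).choose d : ℕ) : ℤ) else 0) = 0 := by
      intro j hj
      rw [Finset.mem_range] at hj
      rw [if_neg (by omega)]
      ring
    rw [Finset.sum_eq_zero h0, if_neg (by omega)]


variable {N d : ℕ}

/-- linear combination of the vertices -/
def T (v : Fin (d+1) → Fin N → ℤ) (lam : Fin (d+1) → ℝ) : Fin N → ℝ :=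
  fun i => ∑ j, lam j * (v j i : ℝ)

def IsLat {N : ℕ} (x : Fin N → ℝ) : Prop := ∀ i, ∃ z : ℤ, x i = (z : ℝ)

def S (v : Fin (d+1) → Fin N → ℤ) (n : ℕ) : Set (Fin (d+1) → ℝ) :=
  {lam | (∀ j, 0 ≤ lam j) ∧ (∑ j, lam j) = (n : ℝ) ∧ IsLat (T v lam)}

def Box (v : Fin (d+1) → Fin N → ℤ) : Set (Fin (d+1) → ℝ) :=
  {r | (∀ j, 0 ≤ r j ∧ r j < 1) ∧ (∃ k : ℕ, (∑ j, r j) = (k : ℝ)) ∧ IsLat (T v r)}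

def deg (r : Fin (d+1) → ℝ) : ℕ := ⌊∑ j, r j⌋₊

def G (v : Fin (d+1) → Fin N → ℤ) (lam : Fin (d+1) → ℝ) : Fin N → ℤ :=
  fun i => ⌊T v lam i⌋

lemma mem_hull_iff {E : Type*} [AddCommGroup E] [Module ℝ E] {m : ℕ} (f : Fin m → E) (x : E) :
    x ∈ convexHull ℝ (Set.range f) ↔
      ∃ μ : Fin m → ℝ, (∀ j, 0 ≤ μ j) ∧ ∑ j, μ j = 1 ∧ ∑ j, μ j • f j = x := by
  rw [convexHull_range_eq_exists_affineCombination]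
  constructor
  · rintro ⟨s, w, hw0, hw1, rfl⟩
    refine ⟨fun j => if j ∈ s then w j else 0, ?_, ?_, ?_⟩
    · intro j
      dsimp only
      split
      · exact hw0 j ‹_›
      · exact le_rfl
    · rw [Finset.sum_ite_mem, Finset.univ_inter, hw1]
    · rw [Finset.affineCombination_eq_linear_combination s f w hw1]
      simp only [ite_smul, zero_smul]
      rw [Finset.sum_ite_mem, Finset.univ_inter]
  · rintro ⟨μ, h0, h1, rfl⟩
    exact ⟨Finset.univ, μ, fun j _ => h0 j, h1,
      (Finset.affineCombination_eq_linear_combination _ _ _ h1)⟩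

lemma comb_inj (v : Fin (d+1) → Fin N → ℤ)
    (hv : AffineIndependent ℝ (fun j => fun i => ((v j i : ℤ) : ℝ)))
    {lam mu : Fin (d+1) → ℝ}
    (hsum : ∑ j, lam j = ∑ j, mu j) (hT : T v lam = T v mu) : lam = mu := by
  rw [affineIndependent_iff] at hv
  have key := hv Finset.univ (lam - mu) ?_ ?_
  · funext j
    have := key j (Finset.mem_univ j)
    simp only [Pi.sub_apply] at this
    linarith
  · simp only [Finset.sum_sub_distrib, Pi.sub_apply]
    simp [hsum]
  · funext i
    rw [Finset.sum_apply]
    simp only [Pi.sub_apply, Pi.smul_apply, smul_eq_mul, sub_mul]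
    rw [Finset.sum_sub_distrib]
    have hTi := congrFun hT i
    simp only [T] at hTi
    simp [hTi]


lemma isLat_T_sub_intvec (v : Fin (d+1) → Fin N → ℤ) (lam : Fin (d+1) → ℝ)
    (c : Fin (d+1) → ℤ) (h : IsLat (T v lam)) :
    IsLat (T v (fun j => lam j - (c j : ℝ))) := by
  intro i
  obtain ⟨z, hz⟩ := h i
  refine ⟨z - ∑ j, c j * v j i, ?_⟩
  simp only [T] at hz ⊢
  have : ∀ j : Fin (d+1), (lam j - (c j : ℝ)) * (v j i : ℝ)
      = lam j * v j i - (c j : ℝ) * (v j i : ℝ) := by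
    intro j; ring
  rw [Finset.sum_congr rfl (fun j _ => this j), Finset.sum_sub_distrib, hz]
  push_cast
  ring

lemma isLat_T_add (v : Fin (d+1) → Fin N → ℤ) (a b : Fin (d+1) → ℝ)
    (ha : IsLat (T v a)) (hb : IsLat (T v b)) : IsLat (T v (fun j => a j + b j)) := by
  intro i
  obtain ⟨z, hz⟩ := ha i
  obtain ⟨w, hw⟩ := hb i
  refine ⟨z + w, ?_⟩
  simp only [T] at hz hw ⊢
  have : ∀ j : Fin (d+1), (a j + b j) * (v j i : ℝ) = a j * v j i + b j * v j i := by
    intro j; ring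
  rw [Finset.sum_congr rfl (fun j _ => this j), Finset.sum_add_distrib, hz, hw]
  push_cast
  ring

lemma isLat_T_neg (v : Fin (d+1) → Fin N → ℤ) (a : Fin (d+1) → ℝ)
    (ha : IsLat (T v a)) : IsLat (T v (fun j => - a j)) := by
  intro i
  obtain ⟨z, hz⟩ := ha i
  refine ⟨-z, ?_⟩
  simp only [T] at hz ⊢
  have h1 : ∑ x : Fin (d+1), -a x * ((v x i : ℤ) : ℝ) = -∑ x, a x * ((v x i : ℤ) : ℝ) := by
    rw [← Finset.sum_neg_distrib]
    exact Finset.sum_congr rfl fun j _ => by ring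
  rw [h1, hz]
  push_cast
  ring

lemma exists_nat_of_int (x : ℝ) (h0 : 0 ≤ x) (z : ℤ) (hz : x = z) : ∃ k : ℕ, x = (k : ℝ) := by
  refine ⟨z.toNat, ?_⟩
  have hz0 : 0 ≤ z := by exact_mod_cast hz ▸ h0
  rw [hz]
  exact_mod_cast (Int.toNat_of_nonneg hz0).symm

/-- characterization of the lattice points of the dilate -/
lemma latticePoints_dilate (v : Fin (d+1) → Fin N → ℤ) (P : Set (Fin N → ℝ))
    (hP : P = convexHull ℝ (Set.range fun j => fun i => ((v j i : ℤ) : ℝ))) (n : ℕ) :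
    latticePoints ((n : ℝ) • P) = G v '' S v n := by
  have hsm : (n : ℝ) • P = convexHull ℝ (Set.range fun j => (n : ℝ) • (fun i => ((v j i : ℤ) : ℝ))) := by
    rw [hP, ← convexHull_smul, Set.smul_set_range]
  ext x
  simp only [latticePoints, Set.mem_setOf_eq, hsm, mem_hull_iff, Set.mem_image]
  constructor
  · rintro ⟨μ, h0, h1, h2⟩
    refine ⟨fun j => (n : ℝ) * μ j, ⟨fun j => mul_nonneg (Nat.cast_nonneg n) (h0 j), ?_, ?_⟩, ?_⟩
    · rw [← Finset.mul_sum, h1, mul_one]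
    · intro i
      refine ⟨x i, ?_⟩
      have := congrFun h2 i
      simp only [Finset.sum_apply, Pi.smul_apply, smul_eq_mul] at this
      simp only [T]
      rw [← this]
      apply Finset.sum_congr rfl
      intro j _
      ring
    · funext i
      simp only [G]
      have hTi : T v (fun j => (n:ℝ) * μ j) i = (x i : ℝ) := by
        have := congrFun h2 i
        simp only [Finset.sum_apply, Pi.smul_apply, smul_eq_mul] at this
        simp only [T]
        rw [← this]
        apply Finset.sum_congr rfl
        intro j _
        ring
      rw [hTi, Int.floor_intCast]
  · rintro ⟨lam, ⟨h0, h1, h2⟩, rfl⟩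
    have hTx : ∀ i, T v lam i = ((G v lam i : ℤ) : ℝ) := by
      intro i
      obtain ⟨z, hz⟩ := h2 i
      simp only [G, hz, Int.floor_intCast]
    rcases Nat.eq_zero_or_pos n with hn | hn
    · subst hn
      have hlam : ∀ j, lam j = 0 := by
        intro j
        have hsum0 : ∑ j, lam j = 0 := by simpa using h1
        have := (Finset.sum_eq_zero_iff_of_nonneg (fun j _ => h0 j)).1 hsum0
        exact this j (Finset.mem_univ j)
      refine ⟨fun _ => (1 : ℝ)/(d+1), fun j => by positivity, ?_, ?_⟩
      · rw [Finset.sum_const, Finset.card_univ, Fintype.card_fin]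
        rw [nsmul_eq_mul, Nat.cast_add, Nat.cast_one]
        field_simp
      · funext i
        simp only [Finset.sum_apply, Pi.smul_apply, smul_eq_mul, Nat.cast_zero]
        have : T v lam i = 0 := by
          simp only [T]
          apply Finset.sum_eq_zero
          intro j _
          rw [hlam j, zero_mul]
        rw [← hTx i] at *
        simp [this]
    · refine ⟨fun j => lam j / n, fun j => div_nonneg (h0 j) (Nat.cast_nonneg n), ?_, ?_⟩
      · rw [← Finset.sum_div, h1, div_self (by positivity)]
      · funext i
        simp only [Finset.sum_apply, Pi.smul_apply, smul_eq_mul]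
        rw [← hTx i]
        simp only [T, Finset.mul_sum]
        apply Finset.sum_congr rfl
        intro j _
        field_simp

lemma G_injOn (v : Fin (d+1) → Fin N → ℤ)
    (hv : AffineIndependent ℝ (fun j => fun i => ((v j i : ℤ) : ℝ))) (n : ℕ) :
    Set.InjOn (G v) (S v n) := by
  intro lam hlam mu hmu h
  obtain ⟨hl0, hl1, hl2⟩ := hlam
  obtain ⟨hm0, hm1, hm2⟩ := hmu
  apply comb_inj v hv (by rw [hl1, hm1])
  funext i
  obtain ⟨z, hz⟩ := hl2 i
  obtain ⟨w, hw⟩ := hm2 i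
  have hGz : G v lam i = z := by simp [G, hz]
  have hGw : G v mu i = w := by simp [G, hw]
  have := congrFun h i
  rw [hGz, hGw] at this
  rw [hz, hw, this]

lemma lat_finite (v : Fin (d+1) → Fin N → ℤ) (P : Set (Fin N → ℝ))
    (hP : P = convexHull ℝ (Set.range fun j => fun i => ((v j i : ℤ) : ℝ))) (n : ℕ) :
    (latticePoints ((n : ℝ) • P)).Finite := by
  set M : ℝ := ∑ j, ∑ i, |((v j i : ℤ) : ℝ)| with hM
  have hMnn : 0 ≤ M := Finset.sum_nonneg fun j _ => Finset.sum_nonneg fun i _ => abs_nonneg _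
  have hvM : ∀ j i, |((v j i : ℤ) : ℝ)| ≤ M := by
    intro j i
    calc |((v j i : ℤ) : ℝ)| ≤ ∑ i', |((v j i' : ℤ) : ℝ)| :=
          Finset.single_le_sum (f := fun i' => |((v j i' : ℤ) : ℝ)|)
            (fun i' _ => abs_nonneg _) (Finset.mem_univ i)
      _ ≤ M := Finset.single_le_sum (f := fun j => ∑ i', |((v j i' : ℤ) : ℝ)|)
          (fun j' _ => Finset.sum_nonneg fun i' _ => abs_nonneg _) (Finset.mem_univ j)
  set C : ℝ := n * M with hC
  have hbound : ∀ x ∈ latticePoints ((n : ℝ) • P), ∀ i, |(x i : ℝ)| ≤ C := by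
    intro x hx i
    rw [latticePoints_dilate v P hP n] at hx
    obtain ⟨lam, ⟨h0, h1, h2⟩, rfl⟩ := hx
    obtain ⟨z, hz⟩ := h2 i
    have hGi : ((G v lam i : ℤ) : ℝ) = T v lam i := by simp [G, hz, Int.floor_intCast]
    rw [hGi]
    calc |T v lam i| ≤ ∑ j, |lam j * (v j i : ℝ)| := Finset.abs_sum_le_sum_abs _ _
      _ ≤ ∑ j, lam j * M := by
          apply Finset.sum_le_sum
          intro j _
          rw [abs_mul, abs_of_nonneg (h0 j)]
          exact mul_le_mul_of_nonneg_left (hvM j i) (h0 j)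
      _ = n * M := by rw [← Finset.sum_mul, h1]
  have hsub : latticePoints ((n : ℝ) • P) ⊆
      {x : Fin N → ℤ | ∀ i, x i ∈ Set.Icc (-⌈C⌉) ⌈C⌉} := by
    intro x hx i
    have h := hbound x hx i
    rw [abs_le] at h
    constructor
    · have : (-⌈C⌉ : ℝ) ≤ (x i : ℝ) := by
        calc (-⌈C⌉ : ℝ) ≤ -C := by simp [Int.le_ceil]
          _ ≤ (x i : ℝ) := h.1
      exact_mod_cast this
    · have : ((x i : ℤ) : ℝ) ≤ (⌈C⌉ : ℝ) := le_trans h.2 (Int.le_ceil C)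
      exact_mod_cast this
  exact (Set.Finite.pi' (fun i => Set.finite_Icc _ _)).subset hsub

lemma S_finite (v : Fin (d+1) → Fin N → ℤ)
    (hv : AffineIndependent ℝ (fun j => fun i => ((v j i : ℤ) : ℝ)))
    (P : Set (Fin N → ℝ))
    (hP : P = convexHull ℝ (Set.range fun j => fun i => ((v j i : ℤ) : ℝ))) (n : ℕ) :
    (S v n).Finite := by
  apply Set.Finite.of_finite_image _ (G_injOn v hv n)
  rw [← latticePoints_dilate v P hP n]
  exact lat_finite v P hP n

lemma ehrhart_card (v : Fin (d+1) → Fin N → ℤ)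
    (hv : AffineIndependent ℝ (fun j => fun i => ((v j i : ℤ) : ℝ)))
    (P : Set (Fin N → ℝ))
    (hP : P = convexHull ℝ (Set.range fun j => fun i => ((v j i : ℤ) : ℝ))) (n : ℕ) :
    ehrhart P n = ((S v n).ncard : ℤ) := by
  unfold ehrhart
  rw [latticePoints_dilate v P hP n, Set.ncard_image_of_injOn (G_injOn v hv n)]

lemma box_sum_eq (v : Fin (d+1) → Fin N → ℤ) {r : Fin (d+1) → ℝ} (hr : r ∈ Box v) :
    (∑ j, r j) = (deg r : ℝ) := by
  obtain ⟨_, ⟨k, hk⟩, _⟩ := hr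
  rw [deg, hk, Nat.floor_natCast]

lemma box_deg_le (v : Fin (d+1) → Fin N → ℤ) {r : Fin (d+1) → ℝ} (hr : r ∈ Box v) :
    deg r ≤ d := by
  have h1 : (∑ j, r j) < d + 1 := by
    calc (∑ j, r j) < ∑ _j : Fin (d+1), (1:ℝ) :=
        Finset.sum_lt_sum_of_nonempty ⟨0, Finset.mem_univ 0⟩ (fun j _ => (hr.1 j).2)
      _ = d + 1 := by
        rw [Finset.sum_const, Finset.card_univ, Fintype.card_fin]
        push_cast
        ring
  rw [box_sum_eq v hr] at h1
  exact_mod_cast Nat.lt_succ_iff.mp (by exact_mod_cast h1)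

lemma box_mem_S (v : Fin (d+1) → Fin N → ℤ) {r : Fin (d+1) → ℝ} (hr : r ∈ Box v) :
    r ∈ S v (deg r) :=
  ⟨fun j => (hr.1 j).1, box_sum_eq v hr, hr.2.2⟩

lemma box_finite (v : Fin (d+1) → Fin N → ℤ)
    (hv : AffineIndependent ℝ (fun j => fun i => ((v j i : ℤ) : ℝ)))
    (P : Set (Fin N → ℝ))
    (hP : P = convexHull ℝ (Set.range fun j => fun i => ((v j i : ℤ) : ℝ))) :
    (Box v).Finite := by
  have hsub : Box v ⊆ ⋃ k ∈ Finset.range (d+1), S v k := by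
    intro r hr
    simp only [Set.mem_iUnion]
    exact ⟨deg r, by simp [Finset.mem_range, Nat.lt_succ_iff, box_deg_le v hr],
      box_mem_S v hr⟩
  exact (Set.Finite.biUnion (Finset.range (d+1)).finite_toSet
    (fun k _ => S_finite v hv P hP k)).subset hsub

lemma fract_mem_box (v : Fin (d+1) → Fin N → ℤ) {lam : Fin (d+1) → ℝ} {n : ℕ}
    (hlam : lam ∈ S v n) : (fun j => Int.fract (lam j)) ∈ Box v := by
  obtain ⟨h0, h1, h2⟩ := hlam
  refine ⟨fun j => ⟨Int.fract_nonneg _, Int.fract_lt_one _⟩, ?_, ?_⟩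
  · apply exists_nat_of_int _ (Finset.sum_nonneg fun j _ => Int.fract_nonneg _)
      ((n : ℤ) - ∑ j, ⌊lam j⌋)
    have : ∀ j : Fin (d+1), Int.fract (lam j) = lam j - (⌊lam j⌋ : ℝ) := fun j => rfl
    rw [Finset.sum_congr rfl (fun j _ => this j), Finset.sum_sub_distrib, h1]
    push_cast
    ring
  · have : (fun j => Int.fract (lam j)) = fun j => lam j - ((⌊lam j⌋ : ℤ) : ℝ) := rfl
    rw [this]
    exact isLat_T_sub_intvec v lam (fun j => ⌊lam j⌋) h2

lemma S_card (v : Fin (d+1) → Fin N → ℤ)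
    (hv : AffineIndependent ℝ (fun j => fun i => ((v j i : ℤ) : ℝ)))
    (P : Set (Fin N → ℝ))
    (hP : P = convexHull ℝ (Set.range fun j => fun i => ((v j i : ℤ) : ℝ)))
    (hBfin : (Box v).Finite) (n : ℕ) :
    (S v n).ncard = ∑ r ∈ hBfin.toFinset,
      (if deg r ≤ n then (n - deg r + d).choose d else 0) := by
  have hSfin := S_finite v hv P hP n
  rw [Set.ncard_eq_toFinset_card (S v n) hSfin]
  have hmem : ∀ lam ∈ hSfin.toFinset, (fun j => Int.fract (lam j)) ∈ hBfin.toFinset := by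
    intro lam hlam
    rw [Set.Finite.mem_toFinset] at *
    exact fract_mem_box v hlam
  rw [Finset.card_eq_sum_card_fiberwise hmem]
  apply Finset.sum_congr rfl
  intro r hr
  rw [Set.Finite.mem_toFinset] at hr
  by_cases hdeg : deg r ≤ n
  · rw [if_pos hdeg]
    rw [← card_tuple d (n - deg r)]
    apply Finset.card_bij' (fun lam _ => fun j => (⌊lam j⌋).toNat)
      (fun a _ => fun j => r j + (a j : ℝ))
    · -- forward membership
      intro lam hlam
      rw [Finset.mem_filter, Set.Finite.mem_toFinset] at hlam
      obtain ⟨⟨h0, h1, h2⟩, hfr⟩ := hlam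
      rw [Finset.Nat.mem_antidiagonalTuple]
      have hfl : ∀ j, 0 ≤ ⌊lam j⌋ := fun j => Int.floor_nonneg.2 (h0 j)
      have hsumZ : ∑ j, ⌊lam j⌋ = (n : ℤ) - (deg r : ℤ) := by
        have hreal : ∑ j, ((⌊lam j⌋ : ℤ) : ℝ) = (n : ℝ) - (deg r : ℝ) := by
          have : ∀ j : Fin (d+1), ((⌊lam j⌋ : ℤ) : ℝ) = lam j - Int.fract (lam j) := by
            intro j
            rw [Int.fract]
            ring
          rw [Finset.sum_congr rfl (fun j _ => this j), Finset.sum_sub_distrib, h1]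
          congr 1
          have : ∀ j : Fin (d+1), Int.fract (lam j) = r j := fun j => congrFun hfr j
          rw [Finset.sum_congr rfl (fun j _ => this j)]
          exact box_sum_eq v hr
        exact_mod_cast hreal
      have : ((∑ i, (⌊lam i⌋).toNat : ℕ) : ℤ) = ((n - deg r : ℕ) : ℤ) := by
        push_cast [Int.toNat_of_nonneg]
        rw [Finset.sum_congr rfl (fun j _ => Int.toNat_of_nonneg (hfl j))]
        rw [hsumZ]
        omega
      exact_mod_cast this
    · -- backward membership
      intro a ha
      rw [Finset.Nat.mem_antidiagonalTuple] at ha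
      rw [Finset.mem_filter, Set.Finite.mem_toFinset]
      have hrb := hr.1
      refine ⟨⟨fun j => add_nonneg (hrb j).1 (Nat.cast_nonneg _), ?_, ?_⟩, ?_⟩
      · rw [Finset.sum_add_distrib, box_sum_eq v hr]
        have : ∑ j, ((a j : ℕ) : ℝ) = ((n - deg r : ℕ) : ℝ) := by
          exact_mod_cast congrArg (Nat.cast : ℕ → ℝ) ha
        rw [this]
        have := Nat.add_sub_cancel' hdeg
        push_cast [Nat.cast_sub hdeg]
        ring
      · have heq : (fun j => r j + ((a j : ℕ) : ℝ)) = fun j => r j - (((-(a j : ℤ)) : ℤ) : ℝ) := by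
          funext j
          push_cast
          ring
        rw [heq]
        exact isLat_T_sub_intvec v r (fun j => -(a j : ℤ)) hr.2.2
      · funext j
        have : Int.fract (r j + ((a j : ℕ) : ℝ)) = Int.fract (r j) := by
          rw [show ((a j : ℕ) : ℝ) = (((a j : ℕ) : ℤ) : ℝ) by push_cast; ring]
          exact Int.fract_add_intCast _ _
        rw [this, Int.fract_eq_self.2 ⟨(hrb j).1, (hrb j).2⟩]
    · -- left inverse
      intro lam hlam
      rw [Finset.mem_filter, Set.Finite.mem_toFinset] at hlam
      obtain ⟨⟨h0, _, _⟩, hfr⟩ := hlam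
      funext j
      have hfl : 0 ≤ ⌊lam j⌋ := Int.floor_nonneg.2 (h0 j)
      have h1 : r j = Int.fract (lam j) := (congrFun hfr j).symm
      simp only []
      rw [h1, Int.fract]
      rw [show (((⌊lam j⌋).toNat : ℕ) : ℝ) = ((⌊lam j⌋ : ℤ) : ℝ) by
        exact_mod_cast congrArg (Int.cast : ℤ → ℝ) (Int.toNat_of_nonneg hfl)]
      ring
    · -- right inverse
      intro a ha
      funext j
      simp only []
      have hfl : ⌊r j + ((a j : ℕ) : ℝ)⌋ = (a j : ℤ) := by
        rw [show ((a j : ℕ) : ℝ) = (((a j : ℕ) : ℤ) : ℝ) by push_cast; ring,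
          Int.floor_add_intCast]
        have : ⌊r j⌋ = 0 := Int.floor_eq_zero_iff.2 ⟨(hr.1 j).1, (hr.1 j).2⟩
        rw [this, zero_add]
      rw [hfl]
      exact Int.toNat_natCast _
  · rw [if_neg hdeg]
    rw [Finset.card_eq_zero, Finset.eq_empty_iff_forall_notMem]
    intro lam hlam
    rw [Finset.mem_filter, Set.Finite.mem_toFinset] at hlam
    obtain ⟨⟨h0, h1, _⟩, hfr⟩ := hlam
    apply hdeg
    have hle : (deg r : ℝ) ≤ (n : ℝ) := by
      rw [← box_sum_eq v hr, ← h1]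
      have : ∀ j : Fin (d+1), r j ≤ lam j := by
        intro j
        have : r j = Int.fract (lam j) := (congrFun hfr j).symm
        rw [this, Int.fract]
        have : (0:ℝ) ≤ ⌊lam j⌋ := by exact_mod_cast Int.floor_nonneg.2 (h0 j)
        linarith
      exact Finset.sum_le_sum fun j _ => this j
    exact_mod_cast hle

lemma ehrhart_formula (v : Fin (d+1) → Fin N → ℤ)
    (hv : AffineIndependent ℝ (fun j => fun i => ((v j i : ℤ) : ℝ)))
    (P : Set (Fin N → ℝ))
    (hP : P = convexHull ℝ (Set.range fun j => fun i => ((v j i : ℤ) : ℝ)))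
    (hBfin : (Box v).Finite) (n : ℕ) :
    ehrhart P n = ∑ r ∈ hBfin.toFinset,
      (if deg r ≤ n then (((n - deg r + d).choose d : ℕ) : ℤ) else 0) := by
  rw [ehrhart_card v hv P hP n, S_card v hv P hP hBfin n]
  rw [Nat.cast_sum]
  apply Finset.sum_congr rfl
  intro r _
  split <;> simp

lemma delta_eq (v : Fin (d+1) → Fin N → ℤ)
    (hv : AffineIndependent ℝ (fun j => fun i => ((v j i : ℤ) : ℝ)))
    (P : Set (Fin N → ℝ))
    (hP : P = convexHull ℝ (Set.range fun j => fun i => ((v j i : ℤ) : ℝ)))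
    (hBfin : (Box v).Finite) (i : ℕ) :
    deltaVec P d i = ((hBfin.toFinset.filter (fun r => deg r = i)).card : ℤ) := by
  unfold deltaVec
  have h1 : ∀ j ∈ Finset.range (i+1),
      (-1 : ℤ) ^ (i - j) * (Nat.choose (d + 1) (i - j)) * ehrhart P j
        = ∑ r ∈ hBfin.toFinset, ((-1 : ℤ) ^ (i - j) * (Nat.choose (d + 1) (i - j)) *
            (if deg r ≤ j then (((j - deg r + d).choose d : ℕ) : ℤ) else 0)) := by
    intro j _
    rw [ehrhart_formula v hv P hP hBfin j, Finset.mul_sum]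
  rw [Finset.sum_congr rfl h1, Finset.sum_comm]
  have h2 : ∀ r ∈ hBfin.toFinset,
      (∑ j ∈ Finset.range (i+1), ((-1 : ℤ) ^ (i - j) * (Nat.choose (d + 1) (i - j)) *
        (if deg r ≤ j then (((j - deg r + d).choose d : ℕ) : ℤ) else 0)))
        = if deg r = i then (1:ℤ) else 0 := fun r _ => key_id' d (deg r) i
  rw [Finset.sum_congr rfl h2, Finset.sum_boole]

/-! ### The group structure on the box points -/

def badd (r s : Fin (d+1) → ℝ) : Fin (d+1) → ℝ := fun j => Int.fract (r j + s j)

def bneg (r : Fin (d+1) → ℝ) : Fin (d+1) → ℝ := fun j => Int.fract (- r j)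

lemma fract_add_fract_left (a b : ℝ) : Int.fract (Int.fract a + b) = Int.fract (a + b) := by
  rw [show Int.fract a + b = a + b - (⌊a⌋ : ℝ) by rw [Int.fract]; ring, Int.fract_sub_intCast]

lemma fract_add_fract_right (a b : ℝ) : Int.fract (a + Int.fract b) = Int.fract (a + b) := by
  rw [add_comm, fract_add_fract_left, add_comm]

lemma zero_mem_box (v : Fin (d+1) → Fin N → ℤ) : (fun _ => (0:ℝ)) ∈ Box v := by
  refine ⟨fun j => ⟨le_rfl, zero_lt_one⟩, ⟨0, by simp⟩, fun i => ⟨0, ?_⟩⟩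
  simp [T]

lemma badd_mem (v : Fin (d+1) → Fin N → ℤ) {r s : Fin (d+1) → ℝ}
    (hr : r ∈ Box v) (hs : s ∈ Box v) : badd r s ∈ Box v := by
  refine ⟨fun j => ⟨Int.fract_nonneg _, Int.fract_lt_one _⟩, ?_, ?_⟩
  · apply exists_nat_of_int _ (Finset.sum_nonneg fun j _ => Int.fract_nonneg _)
      ((deg r : ℤ) + (deg s : ℤ) - ∑ j, ⌊r j + s j⌋)
    have h1 : ∀ j : Fin (d+1), Int.fract (r j + s j)
        = (r j + s j) - ((⌊r j + s j⌋ : ℤ) : ℝ) := fun j => rfl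
    show (∑ j, Int.fract (r j + s j)) = _
    rw [Finset.sum_congr rfl (fun j _ => h1 j), Finset.sum_sub_distrib,
      Finset.sum_add_distrib, box_sum_eq v hr, box_sum_eq v hs]
    push_cast
    ring
  · have h1 : badd r s = fun j => (r j + s j) - ((⌊r j + s j⌋ : ℤ) : ℝ) := rfl
    rw [h1]
    exact isLat_T_sub_intvec v _ _ (isLat_T_add v r s hr.2.2 hs.2.2)

lemma bneg_mem (v : Fin (d+1) → Fin N → ℤ) {r : Fin (d+1) → ℝ}
    (hr : r ∈ Box v) : bneg r ∈ Box v := by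
  refine ⟨fun j => ⟨Int.fract_nonneg _, Int.fract_lt_one _⟩, ?_, ?_⟩
  · apply exists_nat_of_int _ (Finset.sum_nonneg fun j _ => Int.fract_nonneg _)
      (-(deg r : ℤ) - ∑ j, ⌊- r j⌋)
    have h1 : ∀ j : Fin (d+1), Int.fract (- r j)
        = (- r j) - ((⌊- r j⌋ : ℤ) : ℝ) := fun j => rfl
    show (∑ j, Int.fract (- r j)) = _
    rw [Finset.sum_congr rfl (fun j _ => h1 j), Finset.sum_sub_distrib,
      Finset.sum_neg_distrib, box_sum_eq v hr]
    push_cast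
    ring
  · have h1 : bneg r = fun j => (- r j) - ((⌊- r j⌋ : ℤ) : ℝ) := rfl
    rw [h1]
    exact isLat_T_sub_intvec v _ _ (isLat_T_neg v r hr.2.2)

noncomputable instance boxZero (v : Fin (d+1) → Fin N → ℤ) : Zero ↥(Box v) :=
  ⟨⟨fun _ => 0, zero_mem_box v⟩⟩

noncomputable instance boxAdd (v : Fin (d+1) → Fin N → ℤ) : Add ↥(Box v) :=
  ⟨fun r s => ⟨badd r.1 s.1, badd_mem v r.2 s.2⟩⟩

noncomputable instance boxNeg (v : Fin (d+1) → Fin N → ℤ) : Neg ↥(Box v) :=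
  ⟨fun r => ⟨bneg r.1, bneg_mem v r.2⟩⟩

noncomputable instance boxGroup (v : Fin (d+1) → Fin N → ℤ) : AddCommGroup ↥(Box v) where
  zero := 0
  add := (· + ·)
  neg := Neg.neg
  nsmul := nsmulRec
  zsmul := zsmulRec
  add_assoc a b c := Subtype.ext (funext fun j => by
    show Int.fract (Int.fract (a.1 j + b.1 j) + c.1 j)
      = Int.fract (a.1 j + Int.fract (b.1 j + c.1 j))
    rw [fract_add_fract_left, fract_add_fract_right, add_assoc])
  zero_add a := Subtype.ext (funext fun j => by
    show Int.fract (0 + a.1 j) = a.1 j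
    rw [zero_add, Int.fract_eq_self.2 ⟨(a.2.1 j).1, (a.2.1 j).2⟩])
  add_zero a := Subtype.ext (funext fun j => by
    show Int.fract (a.1 j + 0) = a.1 j
    rw [add_zero, Int.fract_eq_self.2 ⟨(a.2.1 j).1, (a.2.1 j).2⟩])
  add_comm a b := Subtype.ext (funext fun j => by
    show Int.fract (a.1 j + b.1 j) = Int.fract (b.1 j + a.1 j)
    rw [add_comm])
  neg_add_cancel a := Subtype.ext (funext fun j => by
    show Int.fract (Int.fract (- a.1 j) + a.1 j) = 0
    rw [fract_add_fract_left, neg_add_cancel, Int.fract_zero])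

lemma box_zero_coord (v : Fin (d+1) → Fin N → ℤ) (j : Fin (d+1)) :
    ((0 : ↥(Box v)) : Fin (d+1) → ℝ) j = 0 := rfl

lemma box_add_coord (v : Fin (d+1) → Fin N → ℤ) (a b : ↥(Box v)) (j : Fin (d+1)) :
    ((a + b : ↥(Box v)) : Fin (d+1) → ℝ) j = Int.fract ((a : Fin (d+1) → ℝ) j + (b : Fin (d+1) → ℝ) j) := rfl

lemma box_neg_coord (v : Fin (d+1) → Fin N → ℤ) (a : ↥(Box v)) (j : Fin (d+1)) :
    ((-a : ↥(Box v)) : Fin (d+1) → ℝ) j = Int.fract (- (a : Fin (d+1) → ℝ) j) := rfl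

lemma box_nsmul_coord (v : Fin (d+1) → Fin N → ℤ) (z : ↥(Box v)) (k : ℕ) (j : Fin (d+1)) :
    ((k • z : ↥(Box v)) : Fin (d+1) → ℝ) j = Int.fract ((k : ℝ) * (z : Fin (d+1) → ℝ) j) := by
  induction k with
  | zero =>
      rw [zero_nsmul]
      simp [box_zero_coord, Int.fract_zero]
  | succ k ih =>
      rw [succ_nsmul, box_add_coord, ih, fract_add_fract_left]
      push_cast
      ring_nf

lemma fract_neg_fract (a : ℝ) : Int.fract (-(Int.fract a)) = Int.fract (-a) := by
  rw [show -(Int.fract a) = -a + ((⌊a⌋ : ℤ) : ℝ) by rw [Int.fract]; ring, Int.fract_add_intCast]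

lemma bneg_bneg (v : Fin (d+1) → Fin N → ℤ) {r : Fin (d+1) → ℝ} (hr : r ∈ Box v) :
    bneg (bneg r) = r := by
  funext j
  show Int.fract (-(Int.fract (- r j))) = r j
  rw [fract_neg_fract, neg_neg, Int.fract_eq_self.2 ⟨(hr.1 j).1, (hr.1 j).2⟩]

lemma deg_bneg (v : Fin (d+1) → Fin N → ℤ) {r : Fin (d+1) → ℝ} (hr : r ∈ Box v)
    (hne : ∀ j, r j ≠ 0) : deg r + deg (bneg r) = d + 1 := by
  have hb := bneg_mem v hr
  have hreal : ((deg r + deg (bneg r) : ℕ) : ℝ) = ((d + 1 : ℕ) : ℝ) := by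
    push_cast
    rw [← box_sum_eq v hr, ← box_sum_eq v hb, ← Finset.sum_add_distrib]
    have h1 : ∀ j : Fin (d+1), r j + bneg r j = 1 := by
      intro j
      have ha : Int.fract (r j) = r j := Int.fract_eq_self.2 ⟨(hr.1 j).1, (hr.1 j).2⟩
      have h2 : Int.fract (- r j) = 1 - Int.fract (r j) :=
        Int.fract_neg (by rw [ha]; exact hne j)
      show r j + Int.fract (- r j) = 1
      rw [h2, ha]
      ring
    rw [Finset.sum_congr rfl (fun j _ => h1 j), Finset.sum_const, Finset.card_univ,
      Fintype.card_fin]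
    push_cast
    ring
  exact_mod_cast hreal

lemma box_full_support (v : Fin (d+1) → Fin N → ℤ) (hBfin : (Box v).Finite)
    {p : ℕ} (hp : p.Prime) (hcard : Nat.card ↥(Box v) = p)
    (z : ↥(Box v)) (hz : ∀ j, 0 < (z : Fin (d+1) → ℝ) j)
    {r : ↥(Box v)} (hrne : r ≠ 0) : ∀ j, (r : Fin (d+1) → ℝ) j ≠ 0 := by
  letI : Fintype ↥(Box v) := hBfin.fintype
  have hcardF : Fintype.card ↥(Box v) = p := by rw [← Nat.card_eq_fintype_card, hcard]
  have hz0 : z ≠ 0 := by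
    intro h
    have h2 := hz 0
    rw [h, box_zero_coord] at h2
    exact lt_irrefl _ h2
  have hord : addOrderOf z = p := by
    have hdvd : addOrderOf z ∣ p := hcardF ▸ addOrderOf_dvd_card
    rcases (Nat.Prime.eq_one_or_self_of_dvd hp _ hdvd) with h1 | h1
    · exact absurd (AddMonoid.addOrderOf_eq_one_iff.1 h1) hz0
    · exact h1
  have hpz : p • z = 0 := by
    rw [← hord]
    exact addOrderOf_nsmul_eq_zero z
  have hppos : (0:ℝ) < p := by exact_mod_cast hp.pos
  -- denominators
  have hc : ∀ j, ∃ c : ℤ, ((c : ℝ) = p * (z : Fin (d+1) → ℝ) j ∧ 1 ≤ c ∧ c ≤ (p:ℤ) - 1) := by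
    intro j
    set x : ℝ := (p : ℝ) * (z : Fin (d+1) → ℝ) j with hx
    have h0 : Int.fract x = 0 := by
      have h3 := congrFun (congrArg (Subtype.val) hpz) j
      rw [box_nsmul_coord] at h3
      exact h3
    have hfl : ((⌊x⌋ : ℤ) : ℝ) = x := by
      have h4 := Int.self_sub_floor x
      rw [h0] at h4
      linarith
    have hxpos : 0 < x := by
      apply mul_pos hppos (hz j)
    have hxlt : x < p := by
      have hzlt : (z : Fin (d+1) → ℝ) j < 1 := (z.2.1 j).2
      calc x = (p:ℝ) * (z : Fin (d+1) → ℝ) j := hx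
        _ < p * 1 := mul_lt_mul_of_pos_left hzlt hppos
        _ = p := mul_one _
    refine ⟨⌊x⌋, hfl, ?_, ?_⟩
    · have : (0:ℝ) < ((⌊x⌋ : ℤ) : ℝ) := by rw [hfl]; exact hxpos
      have : (0:ℤ) < ⌊x⌋ := by exact_mod_cast this
      omega
    · have : ((⌊x⌋ : ℤ) : ℝ) < (p:ℝ) := by rw [hfl]; exact hxlt
      have : (⌊x⌋ : ℤ) < (p:ℤ) := by exact_mod_cast this
      omega
  -- the generator
  set φ : Fin p → ↥(Box v) := fun k => k.1 • z with hφ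
  have hinj : Function.Injective φ := by
    have haux : ∀ k l : Fin p, k.1 ≤ l.1 → φ k = φ l → k = l := by
      intro k l hle h
      have hz2 : (l.1 - k.1) • z = 0 := by
        rw [sub_nsmul z hle, hφ] at *
        simp only at h
        rw [h]
        simp
      have hdvd : p ∣ l.1 - k.1 := by
        have h5 := addOrderOf_dvd_of_nsmul_eq_zero hz2
        rw [hord] at h5
        exact h5
      have : l.1 - k.1 = 0 := by
        rcases Nat.eq_zero_or_pos (l.1 - k.1) with h1 | h1
        · exact h1
        · have := Nat.le_of_dvd h1 hdvd
          have := l.2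
          omega
      exact Fin.ext (by omega)
    intro k l h
    rcases le_total k.1 l.1 with hle | hle
    · exact haux k l hle h
    · exact (haux l k hle h.symm).symm
  have hbij : Function.Bijective φ :=
    (Fintype.bijective_iff_injective_and_card φ).2 ⟨hinj, by simp [hcardF]⟩
  obtain ⟨k, hk⟩ := hbij.2 r
  have hkne : k.1 ≠ 0 := by
    intro h
    apply hrne
    rw [← hk, hφ]
    simp only [h, zero_nsmul]
  intro j
  rw [← hk, hφ]
  simp only []
  rw [box_nsmul_coord]
  intro h0
  obtain ⟨c, hc1, hc2, hc3⟩ := hc j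
  set x : ℝ := (k.1 : ℝ) * (z : Fin (d+1) → ℝ) j with hx
  have hfl : ((⌊x⌋ : ℤ) : ℝ) = x := by
    have h4 := Int.self_sub_floor x
    rw [h0] at h4
    linarith
  have hreal : (k.1 : ℝ) * (c : ℝ) = ((⌊x⌋ : ℤ) : ℝ) * p := by
    rw [hfl, hx, hc1]
    ring
  have hZ : (k.1 : ℤ) * c = ⌊x⌋ * p := by exact_mod_cast hreal
  have hdvd : (p : ℤ) ∣ (k.1 : ℤ) * c := Dvd.intro ⌊x⌋ (by linarith)
  rcases (Nat.prime_iff_prime_int.1 hp).2.2 _ _ hdvd with h1 | h1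
  · have : p ∣ k.1 := Int.natCast_dvd_natCast.1 h1
    have := Nat.le_of_dvd (Nat.pos_of_ne_zero hkne) this
    have := k.2
    omega
  · have := Int.le_of_dvd (by omega) h1
    omega

end Stmt9Aux

theorem stmt9 {N d : ℕ} (p : ℕ) (hp : p.Prime)
    (v : Fin (d + 1) → Fin N → ℤ)
    (hv : AffineIndependent ℝ (fun j => fun i => ((v j i : ℤ) : ℝ)))
    (P : Set (Fin N → ℝ))
    (hP : P = convexHull ℝ (Set.range fun j => fun i => ((v j i : ℤ) : ℝ)))
    (hvol : ∑ i ∈ Finset.range (d + 1), deltaVec P d i = (p : ℤ))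
    (hmm : sInf {i : ℕ | 0 < i ∧ deltaVec P d i ≠ 0} =
      d + 1 - sSup {i : ℕ | deltaVec P d i ≠ 0}) :
    ∀ i ≤ (d - 1) / 2, deltaVec P d (d - i) = deltaVec P d (i + 1) := by
  classical
  have hBfin : (Stmt9Aux.Box v).Finite := Stmt9Aux.box_finite v hv P hP
  have hδ : ∀ k, deltaVec P d k
      = (((hBfin.toFinset.filter (fun r => Stmt9Aux.deg r = k)).card : ℕ) : ℤ) :=
    fun k => Stmt9Aux.delta_eq v hv P hP hBfin k
  have hdegmem : ∀ r ∈ hBfin.toFinset, Stmt9Aux.deg r ∈ Finset.range (d+1) := by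
    intro r hr
    rw [Set.Finite.mem_toFinset] at hr
    rw [Finset.mem_range, Nat.lt_succ_iff]
    exact Stmt9Aux.box_deg_le v hr
  have hcardsum : hBfin.toFinset.card = ∑ k ∈ Finset.range (d+1),
      (hBfin.toFinset.filter (fun r => Stmt9Aux.deg r = k)).card :=
    Finset.card_eq_sum_card_fiberwise hdegmem
  have hcardp : hBfin.toFinset.card = p := by
    have h2 : ((hBfin.toFinset.card : ℕ) : ℤ) = (p : ℤ) := by
      rw [hcardsum, ← hvol]
      push_cast
      exact (Finset.sum_congr rfl fun k _ => by rw [hδ k]).symm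
    exact_mod_cast h2
  have h0mem : (fun _ => (0:ℝ)) ∈ Stmt9Aux.Box v := Stmt9Aux.zero_mem_box v
  have hdeg0 : Stmt9Aux.deg (fun _ : Fin (d+1) => (0:ℝ)) = 0 := by
    simp [Stmt9Aux.deg]
  have hδ0 : deltaVec P d 0 ≠ 0 := by
    rw [hδ 0]
    have hm : (fun _ => (0:ℝ)) ∈ hBfin.toFinset.filter (fun r => Stmt9Aux.deg r = 0) := by
      rw [Finset.mem_filter, Set.Finite.mem_toFinset]
      exact ⟨h0mem, hdeg0⟩
    have := Finset.card_ne_zero_of_mem hm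
    exact_mod_cast this
  have hSub : ∀ k, deltaVec P d k ≠ 0 → k ≤ d := by
    intro k hk
    by_contra h
    push_neg at h
    apply hk
    rw [hδ k]
    have hempty : hBfin.toFinset.filter (fun r => Stmt9Aux.deg r = k) = ∅ := by
      rw [Finset.eq_empty_iff_forall_notMem]
      intro r hrk
      rw [Finset.mem_filter, Set.Finite.mem_toFinset] at hrk
      have := Stmt9Aux.box_deg_le v hrk.1
      omega
    rw [hempty]
    simp
  set m := sSup {i : ℕ | deltaVec P d i ≠ 0} with hmdef
  have hmmem : deltaVec P d m ≠ 0 := Nat.sSup_mem ⟨0, hδ0⟩ ⟨d, fun k hk => hSub k hk⟩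
  have hmd : m ≤ d := hSub m hmmem
  have hmub : ∀ k, deltaVec P d k ≠ 0 → k ≤ m := fun k hk =>
    le_csSup ⟨d, fun k' hk' => hSub k' hk'⟩ hk
  have hm1 : 1 ≤ m := by
    by_contra h
    push_neg at h
    have hz : ∀ k, 1 ≤ k → deltaVec P d k = 0 := by
      intro k hk1
      by_contra hne
      have := hmub k hne
      omega
    have hp1 : (p : ℤ) = 1 := by
      rw [← hvol, Finset.sum_range_succ']
      have hzero : ∀ k ∈ Finset.range d, deltaVec P d (k+1) = 0 := fun k _ => hz (k+1) (by omega)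
      rw [Finset.sum_congr rfl hzero]
      simp only [Finset.sum_const_zero, zero_add]
      rw [hδ 0]
      have hset : hBfin.toFinset.filter (fun r => Stmt9Aux.deg r = 0) = {fun _ => (0:ℝ)} := by
        ext r
        rw [Finset.mem_filter, Set.Finite.mem_toFinset, Finset.mem_singleton]
        constructor
        · rintro ⟨hrB, hr0⟩
          funext j
          have hsum := Stmt9Aux.box_sum_eq v hrB
          rw [hr0] at hsum
          have hnn : ∀ j' ∈ Finset.univ, (0:ℝ) ≤ r j' := fun j' _ => (hrB.1 j').1
          exact (Finset.sum_eq_zero_iff_of_nonneg hnn).1 (by rw [hsum]; norm_num) j (Finset.mem_univ j)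
        · rintro rfl
          exact ⟨h0mem, hdeg0⟩
      rw [hset]
      simp
    have := hp.two_le
    omega
  have hd1 : 1 ≤ d := le_trans hm1 hmd
  set s := sInf {i : ℕ | 0 < i ∧ deltaVec P d i ≠ 0} with hsdef
  have hsmem : s ∈ {i : ℕ | 0 < i ∧ deltaVec P d i ≠ 0} := Nat.sInf_mem ⟨m, ⟨by omega, hmmem⟩⟩
  have hslb : ∀ k, 0 < k → deltaVec P d k ≠ 0 → s ≤ k := fun k h1 h2 => Nat.sInf_le ⟨h1, h2⟩
  have hsm : s = d + 1 - m := hmm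
  have hdeg_pos : ∀ r, r ∈ Stmt9Aux.Box v → r ≠ (fun _ => (0:ℝ)) → 1 ≤ Stmt9Aux.deg r := by
    intro r hrB hrne
    have hex : ∃ j, r j ≠ 0 := by
      by_contra hcon
      push_neg at hcon
      exact hrne (funext fun j => hcon j)
    obtain ⟨j, hj⟩ := hex
    have hj' : 0 < r j := lt_of_le_of_ne (hrB.1 j).1 (Ne.symm hj)
    have hsum : (0:ℝ) < (Stmt9Aux.deg r : ℝ) := by
      rw [← Stmt9Aux.box_sum_eq v hrB]
      exact lt_of_lt_of_le hj' (Finset.single_le_sum (fun j' _ => (hrB.1 j').1) (Finset.mem_univ j))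
    have : 0 < Stmt9Aux.deg r := by exact_mod_cast hsum
    omega
  have hδne_of_mem : ∀ r, r ∈ Stmt9Aux.Box v → deltaVec P d (Stmt9Aux.deg r) ≠ 0 := by
    intro r hrB
    rw [hδ]
    have hm2 : r ∈ hBfin.toFinset.filter (fun r' => Stmt9Aux.deg r' = Stmt9Aux.deg r) := by
      rw [Finset.mem_filter, Set.Finite.mem_toFinset]
      exact ⟨hrB, rfl⟩
    have := Finset.card_ne_zero_of_mem hm2
    exact_mod_cast this
  have hym : ∃ y, y ∈ Stmt9Aux.Box v ∧ Stmt9Aux.deg y = m := by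
    have h1 : deltaVec P d m ≠ 0 := hmmem
    rw [hδ m] at h1
    have h2 : (hBfin.toFinset.filter (fun r => Stmt9Aux.deg r = m)).Nonempty := by
      rw [Finset.nonempty_iff_ne_empty]
      intro hcon
      rw [hcon] at h1
      simp at h1
    obtain ⟨y, hy⟩ := h2
    rw [Finset.mem_filter, Set.Finite.mem_toFinset] at hy
    exact ⟨y, hy.1, hy.2⟩
  obtain ⟨y, hyB, hydeg⟩ := hym
  have hyne : y ≠ (fun _ => (0:ℝ)) := by
    intro h
    rw [h, hdeg0] at hydeg
    omega
  have hbnyB : Stmt9Aux.bneg y ∈ Stmt9Aux.Box v := Stmt9Aux.bneg_mem v hyB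
  have hbny_ne : Stmt9Aux.bneg y ≠ (fun _ => (0:ℝ)) := by
    intro h
    apply hyne
    have h2 := congrArg Stmt9Aux.bneg h
    rw [Stmt9Aux.bneg_bneg v hyB] at h2
    rw [h2]
    funext j
    show Int.fract (-(0:ℝ)) = 0
    simp
  have hdegz_ge : s ≤ Stmt9Aux.deg (Stmt9Aux.bneg y) :=
    hslb _ (hdeg_pos _ hbnyB hbny_ne) (hδne_of_mem _ hbnyB)
  have hyfull : ∀ j, y j ≠ 0 := by
    by_contra hcon
    push_neg at hcon
    obtain ⟨j0, hj0⟩ := hcon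
    have hterm_le : ∀ j : Fin (d+1), y j + Stmt9Aux.bneg y j ≤ 1 := by
      intro j
      rcases eq_or_ne (y j) 0 with h3 | h3
      · have hz3 : Stmt9Aux.bneg y j = 0 := by
          show Int.fract (- y j) = 0
          rw [h3]
          simp
        rw [h3, hz3]
        norm_num
      · have ha : Int.fract (y j) = y j := Int.fract_eq_self.2 ⟨(hyB.1 j).1, (hyB.1 j).2⟩
        have hb3 : Stmt9Aux.bneg y j = 1 - y j := by
          show Int.fract (- y j) = 1 - y j
          rw [Int.fract_neg (by rw [ha]; exact h3), ha]
        rw [hb3]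
        have := (hyB.1 j).1
        linarith
    have hterm0 : y j0 + Stmt9Aux.bneg y j0 = 0 := by
      have hz3 : Stmt9Aux.bneg y j0 = 0 := by
        show Int.fract (- y j0) = 0
        rw [hj0]
        simp
      rw [hj0, hz3]
      ring
    have hsum_le : (Stmt9Aux.deg y : ℝ) + (Stmt9Aux.deg (Stmt9Aux.bneg y) : ℝ) ≤ d := by
      rw [← Stmt9Aux.box_sum_eq v hyB, ← Stmt9Aux.box_sum_eq v hbnyB, ← Finset.sum_add_distrib]
      calc ∑ j, (y j + Stmt9Aux.bneg y j)
          = ∑ j ∈ Finset.univ.erase j0, (y j + Stmt9Aux.bneg y j) + (y j0 + Stmt9Aux.bneg y j0) := by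
            rw [Finset.sum_erase_add _ _ (Finset.mem_univ j0)]
        _ ≤ (∑ _j ∈ Finset.univ.erase j0, (1:ℝ)) + 0 := by
            apply add_le_add _ (le_of_eq hterm0)
            exact Finset.sum_le_sum fun j _ => hterm_le j
        _ = d := by
            rw [Finset.sum_const, add_zero, Finset.card_erase_of_mem (Finset.mem_univ j0),
              Finset.card_univ, Fintype.card_fin]
            simp
    have hge : (d + 1 : ℕ) ≤ Stmt9Aux.deg y + Stmt9Aux.deg (Stmt9Aux.bneg y) := by omega
    have hge' : ((d:ℝ) + 1) ≤ (Stmt9Aux.deg y : ℝ) + (Stmt9Aux.deg (Stmt9Aux.bneg y) : ℝ) := by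
      exact_mod_cast hge
    linarith
  have hzfull : ∀ j, 0 < Stmt9Aux.bneg y j := by
    intro j
    have ha : Int.fract (y j) = y j := Int.fract_eq_self.2 ⟨(hyB.1 j).1, (hyB.1 j).2⟩
    have hb3 : Stmt9Aux.bneg y j = 1 - y j := by
      show Int.fract (- y j) = 1 - y j
      rw [Int.fract_neg (by rw [ha]; exact hyfull j), ha]
    rw [hb3]
    have := (hyB.1 j).2
    linarith
  have hcardNat : Nat.card ↥(Stmt9Aux.Box v) = p := by
    rw [Nat.card_coe_set_eq, Set.ncard_eq_toFinset_card (Stmt9Aux.Box v) hBfin, hcardp]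
  have hfull : ∀ r, r ∈ Stmt9Aux.Box v → r ≠ (fun _ => (0:ℝ)) → ∀ j, r j ≠ 0 := by
    intro r hrB hrne j
    have hne : (⟨r, hrB⟩ : ↥(Stmt9Aux.Box v)) ≠ 0 := fun hcon => hrne (congrArg Subtype.val hcon)
    exact Stmt9Aux.box_full_support v hBfin hp hcardNat ⟨Stmt9Aux.bneg y, hbnyB⟩ hzfull hne j
  have hsym : ∀ k, 1 ≤ k → k ≤ d →
      (hBfin.toFinset.filter (fun r => Stmt9Aux.deg r = k)).card
        = (hBfin.toFinset.filter (fun r => Stmt9Aux.deg r = d + 1 - k)).card := by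
    intro k hk1 hkd
    apply Finset.card_bij' (fun r _ => Stmt9Aux.bneg r) (fun r _ => Stmt9Aux.bneg r)
    · intro r hrk
      rw [Finset.mem_filter, Set.Finite.mem_toFinset] at hrk
      obtain ⟨hrB, hdegk⟩ := hrk
      have hrne : r ≠ (fun _ => (0:ℝ)) := by
        intro h
        rw [h, hdeg0] at hdegk
        omega
      have hpair := Stmt9Aux.deg_bneg v hrB (hfull r hrB hrne)
      rw [Finset.mem_filter, Set.Finite.mem_toFinset]
      exact ⟨Stmt9Aux.bneg_mem v hrB, by omega⟩
    · intro r hrk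
      rw [Finset.mem_filter, Set.Finite.mem_toFinset] at hrk
      obtain ⟨hrB, hdegk⟩ := hrk
      have hrne : r ≠ (fun _ => (0:ℝ)) := by
        intro h
        rw [h, hdeg0] at hdegk
        omega
      have hpair := Stmt9Aux.deg_bneg v hrB (hfull r hrB hrne)
      rw [Finset.mem_filter, Set.Finite.mem_toFinset]
      exact ⟨Stmt9Aux.bneg_mem v hrB, by omega⟩
    · intro r hrk
      rw [Finset.mem_filter, Set.Finite.mem_toFinset] at hrk
      exact Stmt9Aux.bneg_bneg v hrk.1
    · intro r hrk
      rw [Finset.mem_filter, Set.Finite.mem_toFinset] at hrk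
      exact Stmt9Aux.bneg_bneg v hrk.1
  intro i hi
  have hi1 : 1 ≤ i + 1 := by omega
  have hid : i + 1 ≤ d := by omega
  rw [hδ (d - i), hδ (i + 1)]
  have hfin := hsym (i+1) hi1 hid
  rw [show d + 1 - (i + 1) = d - i from by omega] at hfin
  exact_mod_cast congrArg (Nat.cast : ℕ → ℤ) hfin.symm
end
end

section
/- Let d = m + n with positive integers m, n, and for 1 ≤ i ≤ d let v_i ∈ {0,1}^d be the cyclic 0-1 vector with support {i, i+1, ..., i+m−1} (indices mod d). Then the determinant of the d×d circulant matrix with rows v_1,...,v_d equals ±m if gcd(m,n) = 1, and equals 0 if gcd(m,n) ≠ 1. -/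
open scoped BigOperators Pointwise

noncomputable section

theorem stmt11 (m n : ℕ) (hm : 0 < m) (hn : 0 < n) (d : ℕ) (hd : d = m + n)
    (M : Matrix (Fin d) (Fin d) ℤ)
    (hM : ∀ i j, M i j = if (j.val + d - i.val) % d < m then 1 else 0) :
    (Nat.gcd m n = 1 → (M.det = (m : ℤ) ∨ M.det = -(m : ℤ))) ∧
      (Nat.gcd m n ≠ 1 → M.det = 0) := by
  have hd0 : 0 < d := by omega
  have hmd : m ≤ d := by omega
  haveI : NeZero d := ⟨by omega⟩
  set ω : ℂ := Complex.exp (2 * Real.pi * Complex.I / d) with hωdef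
  have hprim : IsPrimitiveRoot ω d := Complex.isPrimitiveRoot_exp d (by omega)
  have hωd : ω ^ d = 1 := hprim.pow_eq_one
  have hzmod : ∀ (z : ℂ), z ^ d = 1 → ∀ a : ℕ, z ^ (a % d) = z ^ a := by
    intro z hz a
    conv_rhs => rw [← Nat.div_add_mod a d]
    rw [pow_add, pow_mul, hz, one_pow, one_mul]
  set p : ℕ → ℂ := fun k => ∑ t ∈ Finset.range m, (ω ^ k) ^ t with hp
  -- arithmetic helper
  have arith : ∀ i t : ℕ, i < d → t < d → ((i + t) % d + d - i) % d = t := by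
    intro i t hi ht
    set s := (i + t) % d + d - i with hs
    have hsi : s + i = (i + t) % d + d := by
      have : i ≤ (i + t) % d + d := by omega
      omega
    have h2 : (s + i) % d = (t + i) % d := by
      rw [hsi, Nat.add_mod_right, Nat.mod_mod_of_dvd _ dvd_rfl, Nat.add_comm i t]
    have h3 : s % d = t % d := Nat.ModEq.add_right_cancel' i h2
    rw [Nat.mod_eq_of_lt ht] at h3
    exact h3
  -- key identity
  have key : (M.det : ℂ) = ∏ k : Fin d, p k.val := by
    set F : Matrix (Fin d) (Fin d) ℂ :=
      Matrix.vandermonde (fun k : Fin d => ω ^ (k : ℕ)) with hF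
    have hFdet : F.det ≠ 0 := by
      rw [hF, Matrix.det_vandermonde]
      apply Finset.prod_ne_zero_iff.mpr
      intro i _
      apply Finset.prod_ne_zero_iff.mpr
      intro j hj
      have hij : i < j := Finset.mem_Ioi.mp hj
      refine sub_ne_zero.mpr fun h => ?_
      have := hprim.pow_inj j.isLt i.isLt h
      omega
    have hmul : (M.map (Int.cast : ℤ → ℂ)) * F =
        F * Matrix.diagonal (fun k : Fin d => p k.val) := by
      ext i j
      rw [Matrix.mul_diagonal, Matrix.mul_apply]
      set z : ℂ := ω ^ (j : ℕ) with hz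
      have hzd : z ^ d = 1 := by
        rw [hz, ← pow_mul, mul_comm, pow_mul, hωd, one_pow]
      have hstep : ∀ l : Fin d, (M.map (Int.cast : ℤ → ℂ)) i l * F l j
          = (if ((l : ℕ) + d - (i : ℕ)) % d < m then 1 else 0) * z ^ (l : ℕ) := by
        intro l
        rw [Matrix.map_apply, hM, hF, Matrix.vandermonde]
        simp only [Matrix.of_apply]
        rw [← pow_mul, mul_comm (l : ℕ) (j : ℕ), pow_mul, ← hz]
        split <;> simp
      rw [Finset.sum_congr rfl (fun l _ => hstep l)]
      have hre := Fintype.sum_equiv (Equiv.addLeft i)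
        (fun t : Fin d => (if (((i + t : Fin d) : ℕ) + d - (i : ℕ)) % d < m then 1 else 0)
            * z ^ ((i + t : Fin d) : ℕ))
        (fun l : Fin d => (if ((l : ℕ) + d - (i : ℕ)) % d < m then 1 else 0) * z ^ (l : ℕ))
        (fun t => rfl)
      rw [← hre]
      have hterm : ∀ t : Fin d,
          (if (((i + t : Fin d) : ℕ) + d - (i : ℕ)) % d < m then (1:ℂ) else 0)
            * z ^ ((i + t : Fin d) : ℕ)
          = (fun u : ℕ => if u < m then z ^ ((i : ℕ) + u) else 0) (t : ℕ) := by
        intro t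
        have hval : ((i + t : Fin d) : ℕ) = ((i : ℕ) + (t : ℕ)) % d := Fin.val_add i t
        rw [hval, arith (i : ℕ) (t : ℕ) i.isLt t.isLt, hzmod z hzd]
        by_cases h : (t : ℕ) < m <;> simp [h]
      rw [Finset.sum_congr rfl (fun t _ => hterm t),
        Fin.sum_univ_eq_sum_range (fun u : ℕ => if u < m then z ^ ((i : ℕ) + u) else 0) d]
      have hfilter : ∑ u ∈ Finset.range d, (if u < m then z ^ ((i : ℕ) + u) else 0)
          = ∑ u ∈ Finset.range m, z ^ ((i : ℕ) + u) := by
        rw [← Finset.sum_filter]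
        congr 1
        ext u
        simp only [Finset.mem_filter, Finset.mem_range]
        omega
      rw [hfilter]
      have hFij : F i j = z ^ (i : ℕ) := by
        rw [hF, Matrix.vandermonde]
        simp only [Matrix.of_apply]
        rw [hz, ← pow_mul, ← pow_mul, mul_comm]
      rw [hFij, hp, Finset.mul_sum]
      refine Finset.sum_congr rfl fun u _ => ?_
      rw [pow_add, hz]
    -- take determinants
    have hdets := congrArg Matrix.det hmul
    rw [Matrix.det_mul, Matrix.det_mul, Matrix.det_diagonal] at hdets
    have hcast : (M.map (Int.cast : ℤ → ℂ)).det = ((M.det : ℤ) : ℂ) := by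
      rw [show (M.map (Int.cast : ℤ → ℂ)) = (Int.castRingHom ℂ).mapMatrix M from rfl,
        ← RingHom.map_det]
      rfl
    rw [hcast] at hdets
    exact mul_right_cancel₀ hFdet (by rw [hdets, mul_comm])
  constructor
  · -- coprime case
    intro hgcd
    left
    have hgd : Nat.Coprime m d := by
      rw [hd, Nat.add_comm m n]
      exact Nat.coprime_add_self_right.mpr hgcd
    -- multiplicative inverse of m mod d
    set m' : ℕ := m ^ (Nat.totient d - 1) with hm'
    have hmm' : m * m' ≡ 1 [MOD d] := by
      have h1 : 1 ≤ Nat.totient d := (Nat.totient_pos).mpr hd0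
      have : m * m' = m ^ Nat.totient d := by
        rw [hm', ← pow_succ']
        congr 1
        omega
      rw [this]
      exact Nat.ModEq.pow_totient hgd
    have hm'd : Nat.Coprime m' d := Nat.Coprime.pow_left _ hgd
    -- the product over Ico 1 d of (ω^k - 1) is nonzero
    have hne : ∀ k ∈ Finset.Ico 1 d, (ω ^ k - 1 : ℂ) ≠ 0 := by
      intro k hk
      rw [Finset.mem_Ico] at hk
      exact sub_ne_zero.mpr (hprim.pow_ne_one_of_pos_of_lt (by omega) hk.2)
    have hA : (∏ k ∈ Finset.Ico 1 d, (ω ^ k - 1)) ≠ 0 :=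
      Finset.prod_ne_zero_iff.mpr hne
    -- reindexing product
    have h3 : ∏ k ∈ Finset.Ico 1 d, (ω ^ (k * m) - 1)
        = ∏ k ∈ Finset.Ico 1 d, (ω ^ k - 1) := by
      refine Finset.prod_nbij' (fun k => k * m % d) (fun k => k * m' % d)
        ?_ ?_ ?_ ?_ ?_
      · intro a ha
        rw [Finset.mem_Ico] at ha ⊢
        refine ⟨Nat.pos_of_ne_zero fun h0 => ?_, Nat.mod_lt _ hd0⟩
        have hdvd : d ∣ a * m := Nat.dvd_of_mod_eq_zero h0
        have : d ∣ a := (Nat.Coprime.dvd_of_dvd_mul_right (hgd.symm)) hdvd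
        have := Nat.le_of_dvd (by omega) this
        omega
      · intro a ha
        rw [Finset.mem_Ico] at ha ⊢
        refine ⟨Nat.pos_of_ne_zero fun h0 => ?_, Nat.mod_lt _ hd0⟩
        have hdvd : d ∣ a * m' := Nat.dvd_of_mod_eq_zero h0
        have : d ∣ a := (Nat.Coprime.dvd_of_dvd_mul_right (hm'd.symm)) hdvd
        have := Nat.le_of_dvd (by omega) this
        omega
      · intro a ha
        rw [Finset.mem_Ico] at ha
        show a * m % d * m' % d = a
        rw [Nat.mod_mul_mod]
        have hmod : a * (m * m') ≡ a * 1 [MOD d] := Nat.ModEq.mul_left a hmm'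
        rw [Nat.mul_assoc]
        calc a * (m * m') % d = a * 1 % d := hmod
          _ = a := by rw [Nat.mul_one, Nat.mod_eq_of_lt ha.2]
      · intro a ha
        rw [Finset.mem_Ico] at ha
        show a * m' % d * m % d = a
        rw [Nat.mod_mul_mod]
        have hmod : a * (m * m') ≡ a * 1 [MOD d] := Nat.ModEq.mul_left a hmm'
        rw [Nat.mul_assoc, Nat.mul_comm m' m]
        calc a * (m * m') % d = a * 1 % d := hmod
          _ = a := by rw [Nat.mul_one, Nat.mod_eq_of_lt ha.2]
      · intro a _
        rw [hzmod ω hωd (a * m)]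
    -- each factor times (ω^k - 1)
    have h2 : ∀ k : ℕ, (ω ^ k - 1) * p k = ω ^ (k * m) - 1 := by
      intro k
      rw [hp]
      rw [mul_comm, geom_sum_mul, ← pow_mul, Nat.mul_comm]
    have h1 : (∏ k ∈ Finset.Ico 1 d, (ω ^ k - 1)) * (∏ k ∈ Finset.Ico 1 d, p k)
        = ∏ k ∈ Finset.Ico 1 d, (ω ^ k - 1) := by
      rw [← Finset.prod_mul_distrib]
      rw [Finset.prod_congr rfl (fun k _ => h2 k)]
      exact h3
    have hIco : (∏ k ∈ Finset.Ico 1 d, p k) = 1 :=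
      mul_left_cancel₀ hA (by rw [h1, mul_one])
    have hp0 : p 0 = (m : ℂ) := by
      rw [hp]
      simp
    have hfin : (M.det : ℂ) = (m : ℂ) := by
      rw [key, Fin.prod_univ_eq_prod_range p d, Finset.range_eq_Ico,
        Finset.prod_eq_prod_Ico_succ_bot hd0, hp0, hIco, mul_one]
    have : ((M.det : ℤ) : ℂ) = ((m : ℤ) : ℂ) := by
      rw [hfin]; push_cast; ring
    exact_mod_cast this
  · -- non-coprime case
    intro hgcd
    set g : ℕ := Nat.gcd m n with hg
    have hgm : g ∣ m := Nat.gcd_dvd_left m n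
    have hgn : g ∣ n := Nat.gcd_dvd_right m n
    have hgd : g ∣ d := by rw [hd]; exact Nat.dvd_add hgm hgn
    have hgpos : 0 < g := Nat.gcd_pos_of_pos_left n hm
    have hg2 : 2 ≤ g := by
      rcases Nat.lt_or_ge g 2 with h | h
      · exfalso; omega
      · exact h
    set k0 : ℕ := d / g with hk0
    have hk0pos : 0 < k0 := Nat.div_pos (Nat.le_of_dvd hd0 hgd) (by omega)
    have hk0lt : k0 < d := Nat.div_lt_self hd0 (by omega)
    have hz1 : ω ^ k0 ≠ 1 := hprim.pow_ne_one_of_pos_of_lt hk0pos.ne' hk0lt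
    have hzm : (ω ^ k0) ^ m = 1 := by
      rw [← pow_mul]
      have : k0 * m = d * (m / g) := by
        obtain ⟨a, ha⟩ := hgd
        obtain ⟨b, hb⟩ := hgm
        rw [hk0, ha, hb]
        rw [Nat.mul_div_cancel_left a (by omega), Nat.mul_div_cancel_left b (by omega)]
        ring
      rw [this, pow_mul, hωd, one_pow]
    have hpk0 : p k0 = 0 := by
      have h2 : p k0 * (ω ^ k0 - 1) = 0 := by
        rw [hp]
        rw [geom_sum_mul, hzm, sub_self]
      rcases mul_eq_zero.mp h2 with h | h
      · exact h
      · exact absurd (sub_eq_zero.mp h) hz1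
    have : (M.det : ℂ) = 0 := by
      rw [key]
      refine Finset.prod_eq_zero (Finset.mem_univ (⟨k0, hk0lt⟩ : Fin d)) ?_
      exact hpk0
    exact_mod_cast this
end
end
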